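/- arXiv:2007.11518 — 5 statements merged into one kernel-verified Lean document; each statement's English description precedes it below -/
import Mathlib

section
/- Let A be a 2×2 integer matrix with determinant 1 and trace > 2, let 𝒳 ⊆ 𝕋² be a periodic orbit of f_A and let 𝒴 ⊆ 𝕋² be a finite f_A-invariant set disjoint from 𝒳. If there exists a positive 𝒳-rectangle disjoint from the lift 𝒴̃, then for every x ∈ 𝒳̃ there exists a positive 𝒳-string with origin x all of whose rectangles are disjoint from 𝒴̃. -/
/- Common setup: following the paper, we identify each subset of the torus
`𝕋² = ℝ²/ℤ²` with its (`ℤ²`-saturated) lift to `ℝ²`. -/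

open Matrix Set
open scoped Pointwise

namespace Paper

/-- Points of the plane ℝ². -/
abbrev V : Type := Fin 2 → ℝ

/-- The integer lattice ℤ² ⊆ ℝ². -/
def lattice : Set V := Set.range fun m : Fin 2 → ℤ => fun i => (m i : ℝ)

/-- The linear action of an integer matrix on ℝ². -/
def actR (A : Matrix (Fin 2) (Fin 2) ℤ) (v : V) : V :=
  (A.map (Int.cast : ℤ → ℝ)).mulVec v

/-- `E ⊆ ℝ²` is the lift of a finite subset of the torus. -/
def IsTorusFinite (E : Set V) : Prop := ∃ F : Set V, F.Finite ∧ E = F + lattice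

/-- `E` is the lift of an `f_A`-invariant subset of the torus. -/
def IsInvariant (A : Matrix (Fin 2) (Fin 2) ℤ) (E : Set V) : Prop := actR A '' E = E

/-- `E` is the lift of a periodic orbit of `f_A`. -/
def IsPeriodicOrbit (A : Matrix (Fin 2) (Fin 2) ℤ) (E : Set V) : Prop :=
  ∃ x : V, ∃ p : ℕ, 0 < p ∧ (actR A)^[p] x - x ∈ lattice ∧
    E = {v | ∃ i : ℕ, v - (actR A)^[i] x ∈ lattice}

/-- A rectangle `R(p; s, u)`, recorded via its basepoint `p` and its side
lengths `s, u > 0` (in the directions of the fixed eigenvectors `v^s, v^u`). -/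
structure Rect where
  p : V
  s : ℝ
  u : ℝ
  s_pos : 0 < s
  u_pos : 0 < u

namespace Rect

/-- The set of points of the rectangle `R(p;s,u)`. -/
def carrier (vs vu : V) (R : Rect) : Set V :=
  {q | ∃ a b : ℝ, 0 ≤ a ∧ a ≤ R.s ∧ 0 ≤ b ∧ b ≤ R.u ∧ q = R.p + a • vs + b • vu}

/-- Endpoint of the increasing diagonal (whose origin is `R.p`). -/
def incEnd (vs vu : V) (R : Rect) : V := R.p + R.s • vs + R.u • vu

/-- Origin of the decreasing diagonal. -/
def decOrigin (vs : V) (R : Rect) : V := R.p + R.s • vs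

/-- Endpoint of the decreasing diagonal. -/
def decEnd (vu : V) (R : Rect) : V := R.p + R.u • vu

/-- `R` is a positive `E`-rectangle. -/
def IsPos (vs vu : V) (E : Set V) (R : Rect) : Prop :=
  R.p ∈ E ∧ R.incEnd vs vu ∈ E

/-- `R` is a negative `E`-rectangle. -/
def IsNeg (vs vu : V) (E : Set V) (R : Rect) : Prop :=
  R.decOrigin vs ∈ E ∧ R.decEnd vu ∈ E

/-- `R` is a primitive positive `E`-rectangle. -/
def IsPrimPos (vs vu : V) (E : Set V) (R : Rect) : Prop :=
  R.IsPos vs vu E ∧ R.carrier vs vu ∩ E = {R.p, R.incEnd vs vu}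

/-- `R` is a primitive negative `E`-rectangle. -/
def IsPrimNeg (vs vu : V) (E : Set V) (R : Rect) : Prop :=
  R.IsNeg vs vu E ∧ R.carrier vs vu ∩ E = {R.decOrigin vs, R.decEnd vu}

/-- Bottom stable side of a rectangle. -/
def botSide (vs : V) (R : Rect) : Set V :=
  {q | ∃ a : ℝ, 0 ≤ a ∧ a ≤ R.s ∧ q = R.p + a • vs}

/-- Top stable side of a rectangle. -/
def topSide (vs vu : V) (R : Rect) : Set V :=
  {q | ∃ a : ℝ, 0 ≤ a ∧ a ≤ R.s ∧ q = R.p + a • vs + R.u • vu}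

/-- Left unstable side of a rectangle. -/
def leftSide (vu : V) (R : Rect) : Set V :=
  {q | ∃ b : ℝ, 0 ≤ b ∧ b ≤ R.u ∧ q = R.p + b • vu}

/-- Interior of a rectangle. -/
def interior (vs vu : V) (R : Rect) : Set V :=
  {q | ∃ a b : ℝ, 0 < a ∧ a < R.s ∧ 0 < b ∧ b < R.u ∧ q = R.p + a • vs + b • vu}

end Rect

/-- The (closed) quadrant `C₊₊(x)`. -/
def quadPP (vs vu x : V) : Set V :=
  {q | ∃ a b : ℝ, 0 ≤ a ∧ 0 ≤ b ∧ q = x + a • vs + b • vu}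

/-- `D` is a right horizontal subrectangle of `R`. -/
def IsRightHorizSub (vs : V) (D R : Rect) : Prop :=
  D.s ≤ R.s ∧ D.u = R.u ∧ D.p = R.p + (R.s - D.s) • vs

/-- A positive `X`-string with origin `x`: a sequence of positive `X`-rectangles,
the first one having `x` as origin of its increasing diagonal, consecutive ones
meeting exactly at one point which is the endpoint of the increasing diagonal of
the former and the origin of the increasing diagonal of the latter. -/
def IsPosString (vs vu : V) (X : Set V) (x : V) (R : ℕ → Rect) : Prop :=
  (∀ i, (R i).IsPos vs vu X) ∧ (R 0).p = x ∧
    ∀ i, (R i).carrier vs vu ∩ (R (i + 1)).carrier vs vu = {(R i).incEnd vs vu} ∧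
      (R (i + 1)).p = (R i).incEnd vs vu

/-- A positive `X`-staircase with origin `x`. -/
def IsPosStaircase (vs vu : V) (X : Set V) (x : V) (R : ℕ → Rect) : Prop :=
  (∀ i, (R i).carrier vs vu ⊆ quadPP vs vu x) ∧
    ∃ Del : ℕ → Rect, IsPosString vs vu X x Del ∧ R 0 = Del 0 ∧
      (∀ i, 1 ≤ i → IsRightHorizSub vs (Del i) (R i)) ∧
      (∀ i, (R i).topSide vs vu ⊆ (R (i + 1)).botSide vs) ∧
      ∃ C : ℝ, ∀ i, (Del (i + 1)).s / (Del i).s ≤ C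

/-- Stable side lengths of the primitive positive `(X, x)`-rectangles. -/
def baseLengths (vs vu : V) (X : Set V) (x : V) : Set ℝ :=
  {s | ∃ R : Rect, R.IsPrimPos vs vu X ∧ R.p = x ∧ R.s = s}

/-- The Euclidean norm of a point of ℝ². -/
noncomputable def euclNorm (v : V) : ℝ := Real.sqrt ((v 0) ^ 2 + (v 1) ^ 2)

/-- `Y` is the lift of an `ε`-dense subset of the torus, for the metric on the
torus induced by the Euclidean metric of ℝ². -/
def EDense (ε : ℝ) (Y : Set V) : Prop := ∀ v : V, ∃ y ∈ Y, euclNorm (v - y) ≤ ε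

/-- The lift of `{(0,1/2), (1/2,0), (1/2,1/2)}`, i.e. the set
`{(0,1/2), (1/2,0), (1/2,1/2)} + ℤ²`. -/
def halfPoints : Set V :=
  {v : V | ∃ w ∈ ({![0, 1/2], ![1/2, 0], ![1/2, 1/2]} : Set V), v - w ∈ lattice}

/-- The lift of the point `(1/2,1/2)` of the torus, i.e. `(1/2,1/2) + ℤ²`. -/
def halfCenter : Set V := {v : V | v - ![1/2, 1/2] ∈ lattice}


private lemma lat_add {a b : V} (ha : a ∈ lattice) (hb : b ∈ lattice) : a + b ∈ lattice := by
  obtain ⟨m, rfl⟩ := ha; obtain ⟨n, rfl⟩ := hb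
  exact ⟨m + n, by funext i; simp⟩

private lemma lat_neg {a : V} (ha : a ∈ lattice) : -a ∈ lattice := by
  obtain ⟨m, rfl⟩ := ha
  exact ⟨-m, by funext i; simp⟩

private lemma lat_sub {a b : V} (ha : a ∈ lattice) (hb : b ∈ lattice) : a - b ∈ lattice := by
  simpa [sub_eq_add_neg] using lat_add ha (lat_neg hb)

private lemma actR_add (A : Matrix (Fin 2) (Fin 2) ℤ) (v w : V) :
    actR A (v + w) = actR A v + actR A w := by simp [actR, Matrix.mulVec_add]

private lemma actR_smul (A : Matrix (Fin 2) (Fin 2) ℤ) (c : ℝ) (v : V) :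
    actR A (c • v) = c • actR A v := by simp [actR, Matrix.mulVec_smul]

private lemma actR_sub (A : Matrix (Fin 2) (Fin 2) ℤ) (v w : V) :
    actR A (v - w) = actR A v - actR A w := by simp [actR, Matrix.mulVec_sub]

private lemma actR_lat (A : Matrix (Fin 2) (Fin 2) ℤ) {t : V} (ht : t ∈ lattice) :
    actR A t ∈ lattice := by
  obtain ⟨m, rfl⟩ := ht
  refine ⟨A.mulVec m, ?_⟩
  funext i
  simp [actR, Matrix.mulVec, dotProduct, Fin.sum_univ_two, Matrix.map_apply]

private lemma iter_add (A : Matrix (Fin 2) (Fin 2) ℤ) (k : ℕ) (v w : V) :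
    (actR A)^[k] (v + w) = (actR A)^[k] v + (actR A)^[k] w := by
  induction k generalizing v w with
  | zero => simp
  | succ k ih => simp [Function.iterate_succ_apply, actR_add, ih]

private lemma iter_smul (A : Matrix (Fin 2) (Fin 2) ℤ) (k : ℕ) (c : ℝ) (v : V) :
    (actR A)^[k] (c • v) = c • (actR A)^[k] v := by
  induction k generalizing v with
  | zero => simp
  | succ k ih => simp [Function.iterate_succ_apply, actR_smul, ih]

private lemma iter_sub (A : Matrix (Fin 2) (Fin 2) ℤ) (k : ℕ) (v w : V) :
    (actR A)^[k] (v - w) = (actR A)^[k] v - (actR A)^[k] w := by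
  induction k generalizing v w with
  | zero => simp
  | succ k ih => simp [Function.iterate_succ_apply, actR_sub, ih]

private lemma iter_lat (A : Matrix (Fin 2) (Fin 2) ℤ) (k : ℕ) {t : V} (ht : t ∈ lattice) :
    (actR A)^[k] t ∈ lattice := by
  induction k with
  | zero => simpa
  | succ k ih => rw [Function.iterate_succ_apply']; exact actR_lat A ih

private lemma actR_inj (A : Matrix (Fin 2) (Fin 2) ℤ) (hdet : A.det = 1) :
    Function.Injective (actR A) := by
  have hleft : ∀ v : V, actR A.adjugate (actR A v) = v := by
    intro v
    have h1 : (A.adjugate * A).map (Int.cast : ℤ → ℝ)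
        = (A.adjugate.map Int.cast) * (A.map Int.cast) := by
      simpa using Matrix.map_mul (L := A.adjugate) (M := A) (f := Int.castRingHom ℝ)
    have h2 : A.adjugate * A = 1 := by rw [Matrix.adjugate_mul, hdet]; simp
    simp only [actR, Matrix.mulVec_mulVec, ← h1, h2]
    simp
  intro u v huv
  have := congrArg (actR A.adjugate) huv
  simpa [hleft] using this


private lemma corner_lemma (vs vu : V)
    (hindep : ∀ a b : ℝ, a • vs + b • vu = 0 → a = 0 ∧ b = 0)
    (R R' : Rect) (hp : R'.p = R.incEnd vs vu) :
    R.carrier vs vu ∩ R'.carrier vs vu = {R.incEnd vs vu} := by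
  ext q
  constructor
  · rintro ⟨⟨a, b, ha0, has, hb0, hbu, rfl⟩, ⟨a', b', ha0', _, hb0', _, hq⟩⟩
    rw [hp] at hq
    unfold Rect.incEnd at hq ⊢
    have h0 : (a - (R.s + a')) • vs + (b - (R.u + b')) • vu = 0 := by
      linear_combination (norm := module) hq
    obtain ⟨h1, h2⟩ := hindep _ _ h0
    have ha : a = R.s := by
      have : a = R.s + a' := by linarith [sub_eq_zero.mp (by linarith [h1] : a - (R.s + a') = 0)]
      linarith
    have hb : b = R.u := by
      have : b = R.u + b' := by linarith [sub_eq_zero.mp (by linarith [h2] : b - (R.u + b') = 0)]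
      linarith
    simp [ha, hb, Set.mem_singleton_iff]
  · rintro rfl
    refine ⟨⟨R.s, R.u, le_of_lt R.s_pos, le_refl _, le_of_lt R.u_pos, le_refl _, rfl⟩,
      ⟨0, 0, le_refl _, le_of_lt R'.s_pos, le_refl _, le_of_lt R'.u_pos, by simp [hp]⟩⟩

/-- if there is a positive `𝒳`-rectangle disjoint from `𝒴̃`, then
every `x ∈ 𝒳̃` is the origin of a positive `𝒳`-string all of whose rectangles
are disjoint from `𝒴̃`. -/
theorem statement_6 (A : Matrix (Fin 2) (Fin 2) ℤ) (hdet : A.det = 1) (htr : 2 < A.trace)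
    (lam : ℝ) (hlam : 1 < lam) (vs vu : V) (hvs : vs ≠ 0) (hvu : vu ≠ 0)
    (hAs : actR A vs = lam⁻¹ • vs) (hAu : actR A vu = lam • vu)
    (X Y : Set V) (hX : IsPeriodicOrbit A X)
    (hYfin : IsTorusFinite Y) (hYinv : IsInvariant A Y) (hXY : Disjoint X Y)
    (h : ∃ R : Rect, R.IsPos vs vu X ∧ Disjoint (R.carrier vs vu) Y) :
    ∀ x ∈ X, ∃ R : ℕ → Rect, IsPosString vs vu X x R ∧
      ∀ i, Disjoint ((R i).carrier vs vu) Y := by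
  classical
  have hlam0 : (0:ℝ) < lam := lt_trans one_pos hlam
  have hlamne : lam ≠ 0 := ne_of_gt hlam0
  -- linear independence of vs, vu
  have hinvlt : lam⁻¹ < lam := by
    nlinarith [inv_mul_cancel₀ hlamne, inv_pos.mpr hlam0]
  have hindep : ∀ a b : ℝ, a • vs + b • vu = 0 → a = 0 ∧ b = 0 := by
    intro a b hab
    have h2 : (a * lam⁻¹) • vs + (b * lam) • vu = 0 := by
      have h := congrArg (actR A) hab
      rw [actR_add, actR_smul, actR_smul, hAs, hAu, smul_smul, smul_smul] at h
      simpa [actR] using h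
    have h3 : (a * lam) • vs + (b * lam) • vu = 0 := by
      have h := congrArg (fun w : V => lam • w) hab
      simp only [smul_add, smul_smul, smul_zero] at h
      have e1 : lam * a = a * lam := mul_comm _ _
      have e2 : lam * b = b * lam := mul_comm _ _
      rwa [e1, e2] at h
    have h4 : (a * lam - a * lam⁻¹) • vs = 0 := by
      linear_combination (norm := module) h3 - h2
    rcases smul_eq_zero.mp h4 with hc | hv
    · have hfac : a * (lam - lam⁻¹) = 0 := by nlinarith [hc]
      have ha : a = 0 := by
        rcases mul_eq_zero.mp hfac with h | h
        · exact h
        · exfalso; nlinarith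
      refine ⟨ha, ?_⟩
      have hb' : b • vu = 0 := by rw [ha] at hab; simpa using hab
      rcases smul_eq_zero.mp hb' with hb | hv
      · exact hb
      · exact absurd hv hvu
    · exact absurd hv hvs
  obtain ⟨R0, hR0pos, hR0dis⟩ := h
  obtain ⟨x0, per, hper_pos, hper, rfl⟩ := hX
  have lat_zero : (0:V) ∈ lattice := ⟨0, by funext i; simp⟩
  have hinj : Function.Injective (actR A) := actR_inj A hdet
  have hiter_inj : ∀ k : ℕ, Function.Injective ((actR A)^[k]) :=
    fun k => Function.Injective.iterate hinj k
  -- Y facts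
  have Ysat : ∀ {y : V}, y ∈ Y → ∀ {t : V}, t ∈ lattice → y + t ∈ Y := by
    obtain ⟨F, hFfin, hYeq⟩ := hYfin
    intro y hy t ht
    rw [hYeq] at hy ⊢
    obtain ⟨f, hf, l, hl, hfl⟩ := hy
    exact ⟨f, hf, l + t, lat_add hl ht, by
      simpa [add_assoc] using congrArg (· + t) hfl⟩
  have Yiter : ∀ k : ℕ, (actR A)^[k] '' Y = Y := by
    intro k
    induction k with
    | zero => simp
    | succ k ih => rw [Function.iterate_succ', Set.image_comp, ih, hYinv]
  have Ymem : ∀ (k : ℕ) (v : V), (actR A)^[k] v ∈ Y → v ∈ Y := by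
    intro k v hv
    rw [← Yiter k] at hv
    obtain ⟨w, hw, hwv⟩ := hv
    rwa [← hiter_inj k hwv]
  -- X facts
  have Xlat : ∀ {v : V}, (∃ i, v - (actR A)^[i] x0 ∈ lattice) → ∀ {t : V}, t ∈ lattice →
      (∃ i, (v + t) - (actR A)^[i] x0 ∈ lattice) := by
    rintro v ⟨i, hi⟩ t ht
    refine ⟨i, ?_⟩
    have := lat_add hi ht
    rwa [sub_add_eq_add_sub] at this
  have XactRk : ∀ (k : ℕ) {v : V}, (∃ i, v - (actR A)^[i] x0 ∈ lattice) →
      (∃ i, (actR A)^[k] v - (actR A)^[i] x0 ∈ lattice) := by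
    rintro k v ⟨i, hi⟩
    refine ⟨k + i, ?_⟩
    have := iter_lat A k hi
    rwa [iter_sub, ← Function.iterate_add_apply] at this
  have hperiod : ∀ (n m : ℕ), (actR A)^[m + n * per] x0 - (actR A)^[m] x0 ∈ lattice := by
    intro n
    induction n with
    | zero => intro m; simpa using lat_zero
    | succ n ih =>
      intro m
      have h2 : (actR A)^[m + n * per + per] x0 - (actR A)^[m + n * per] x0 ∈ lattice := by
        have := iter_lat A (m + n * per) hper
        rwa [iter_sub, ← Function.iterate_add_apply, Nat.add_comm (m + n * per) per,
          Nat.add_comm per (m + n * per)] at this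
      have h3 := lat_add h2 (ih m)
      have heq : m + (n + 1) * per = m + n * per + per := by ring
      rw [heq]
      convert h3 using 1
      abel
  -- eigen-iterates
  have iter_vs : ∀ k : ℕ, (actR A)^[k] vs = (lam⁻¹) ^ k • vs := by
    intro k
    induction k with
    | zero => simp
    | succ k ih =>
      rw [Function.iterate_succ_apply, hAs, iter_smul, ih, smul_smul, ← pow_succ']
  have iter_vu : ∀ k : ℕ, (actR A)^[k] vu = lam ^ k • vu := by
    intro k
    induction k with
    | zero => simp
    | succ k ih =>
      rw [Function.iterate_succ_apply, hAu, iter_smul, ih, smul_smul, ← pow_succ']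
  -- key: every point of X is the basepoint of a good rectangle
  have key : ∀ v, (∃ i, v - (actR A)^[i] x0 ∈ lattice) →
      ∃ R : Rect, R.p = v ∧ R.IsPos vs vu {w | ∃ i, w - (actR A)^[i] x0 ∈ lattice} ∧
        Disjoint (R.carrier vs vu) Y := by
    rintro v ⟨i, hi⟩
    obtain ⟨j, hj⟩ := hR0pos.1
    have hPj : j ≤ (j + 1) * per := by nlinarith [hper_pos]
    obtain ⟨k, hjk⟩ : ∃ k, k + j = i + (j + 1) * per := ⟨i + (j + 1) * per - j, by omega⟩
    have ht : v - (actR A)^[k] R0.p ∈ lattice := by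
      have h2 : (actR A)^[k] R0.p - (actR A)^[k + j] x0 ∈ lattice := by
        have := iter_lat A k hj
        rwa [iter_sub, ← Function.iterate_add_apply] at this
      have h3 : (actR A)^[k + j] x0 - (actR A)^[i] x0 ∈ lattice := by
        rw [hjk]; exact hperiod (j + 1) i
      have h4 := lat_sub (lat_sub hi h2) h3
      convert h4 using 1
      abel
    have hlamk : (0:ℝ) < lam ^ k := pow_pos hlam0 k
    have hlamik : (0:ℝ) < lam⁻¹ ^ k := pow_pos (inv_pos.mpr hlam0) k
    have hcancel : lam⁻¹ ^ k * lam ^ k = 1 := by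
      rw [← mul_pow, inv_mul_cancel₀ hlamne, one_pow]
    have hcancel' : lam ^ k * lam⁻¹ ^ k = 1 := by
      rw [← mul_pow, mul_inv_cancel₀ hlamne, one_pow]
    have haff : ∀ a b : ℝ, (actR A)^[k] (R0.p + a • vs + b • vu)
        = (actR A)^[k] R0.p + (a * lam⁻¹ ^ k) • vs + (b * lam ^ k) • vu := by
      intro a b
      rw [iter_add, iter_add, iter_smul, iter_smul, iter_vs, iter_vu, smul_smul, smul_smul]
    refine ⟨⟨v, R0.s * lam⁻¹ ^ k, R0.u * lam ^ k,
      mul_pos R0.s_pos hlamik, mul_pos R0.u_pos hlamk⟩, rfl, ⟨⟨i, hi⟩, ?_⟩, ?_⟩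
    · -- incEnd ∈ X
      have hEnd : Rect.incEnd vs vu ⟨v, R0.s * lam⁻¹ ^ k, R0.u * lam ^ k,
          mul_pos R0.s_pos hlamik, mul_pos R0.u_pos hlamk⟩
          = (actR A)^[k] (R0.incEnd vs vu) + (v - (actR A)^[k] R0.p) := by
        show v + (R0.s * lam⁻¹ ^ k) • vs + (R0.u * lam ^ k) • vu = _
        rw [Rect.incEnd, haff]
        abel
      rw [hEnd]
      exact Xlat (XactRk k hR0pos.2) ht
    · -- disjointness
      rw [Set.disjoint_left]
      rintro q ⟨a', b', ha0', has', hb0', hbu', rfl⟩ hqY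
      have hwcar : R0.p + (a' * lam ^ k) • vs + (b' * lam⁻¹ ^ k) • vu ∈ R0.carrier vs vu := by
        refine ⟨a' * lam ^ k, b' * lam⁻¹ ^ k, mul_nonneg ha0' hlamk.le, ?_,
          mul_nonneg hb0' hlamik.le, ?_, rfl⟩
        · calc a' * lam ^ k ≤ (R0.s * lam⁻¹ ^ k) * lam ^ k :=
                mul_le_mul_of_nonneg_right has' hlamk.le
            _ = R0.s := by rw [mul_assoc, hcancel, mul_one]
        · calc b' * lam⁻¹ ^ k ≤ (R0.u * lam ^ k) * lam⁻¹ ^ k :=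
                mul_le_mul_of_nonneg_right hbu' hlamik.le
            _ = R0.u := by rw [mul_assoc, hcancel', mul_one]
      have hq' : v + a' • vs + b' • vu
          = (actR A)^[k] (R0.p + (a' * lam ^ k) • vs + (b' * lam⁻¹ ^ k) • vu)
            + (v - (actR A)^[k] R0.p) := by
        rw [haff]
        have c1 : a' * lam ^ k * lam⁻¹ ^ k = a' := by rw [mul_assoc, hcancel', mul_one]
        have c2 : b' * lam⁻¹ ^ k * lam ^ k = b' := by rw [mul_assoc, hcancel, mul_one]
        rw [c1, c2]
        abel
      have hYw : (actR A)^[k] (R0.p + (a' * lam ^ k) • vs + (b' * lam⁻¹ ^ k) • vu) ∈ Y := by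
        have h5 : (v + a' • vs + b' • vu) + (-(v - (actR A)^[k] R0.p)) ∈ Y :=
          Ysat hqY (lat_neg ht)
        have h6 : (v + a' • vs + b' • vu) + (-(v - (actR A)^[k] R0.p))
            = (actR A)^[k] (R0.p + (a' * lam ^ k) • vs + (b' * lam⁻¹ ^ k) • vu) := by
          rw [hq']; abel
        rwa [h6] at h5
      exact (Set.disjoint_left.mp hR0dis hwcar) (Ymem k _ hYw)
  intro x hx
  choose F hFp hFpos hFdis using key
  let g : ℕ → {v : V // ∃ i, v - (actR A)^[i] x0 ∈ lattice} := fun n =>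
    Nat.rec ⟨x, hx⟩ (fun _ prev =>
      ⟨(F prev.1 prev.2).incEnd vs vu, (hFpos prev.1 prev.2).2⟩) n
  refine ⟨fun n => F (g n).1 (g n).2, ⟨fun i => hFpos _ _, hFp _ _, fun i => ?_⟩,
    fun i => hFdis _ _⟩
  have hpi : (F (g (i+1)).1 (g (i+1)).2).p = (F (g i).1 (g i).2).incEnd vs vu := hFp _ _
  exact ⟨corner_lemma vs vu hindep _ _ hpi, hpi⟩

end Paper
end

section
/- Let A be a 2×2 integer matrix with determinant 1 and trace > 2, and let 𝒳, 𝒴 ⊆ 𝕋² be disjoint finite f_A-invariant sets with 𝒴 nonempty, and x ∈ 𝒳̃. Then every positive 𝒳-staircase (R_i)_{i≥0} with origin x all of whose rectangles are disjoint from the lift 𝒴̃ has an axis of finite length, i.e. the series Σ_{i≥0} ℓ^u(R_i) converges. -/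
/- Common setup: following the paper, we identify each subset of the torus
`𝕋² = ℝ²/ℤ²` with its (`ℤ²`-saturated) lift to `ℝ²`. -/

open Matrix Set
open scoped Pointwise

namespace Paper

set_option maxHeartbeats 1000000 in
/-- every positive `𝒳`-staircase with origin `x ∈ 𝒳̃` whose
rectangles are all disjoint from `𝒴̃` has an axis of finite length, i.e. the
series `Σ ℓ^u(R_i)` converges. -/
theorem statement_8 (A : Matrix (Fin 2) (Fin 2) ℤ) (hdet : A.det = 1) (htr : 2 < A.trace)
    (lam : ℝ) (hlam : 1 < lam) (vs vu : V) (hvs : vs ≠ 0) (hvu : vu ≠ 0)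
    (hAs : actR A vs = lam⁻¹ • vs) (hAu : actR A vu = lam • vu)
    (X Y : Set V) (hXY : Disjoint X Y)
    (hXfin : IsTorusFinite X) (hXinv : IsInvariant A X)
    (hYfin : IsTorusFinite Y) (hYinv : IsInvariant A Y) (hYne : Y.Nonempty)
    (x : V) (hx : x ∈ X) (R : ℕ → Rect)
    (hst : IsPosStaircase vs vu X x R)
    (hdisj : ∀ i, Disjoint ((R i).carrier vs vu) Y) :
    Summable fun i => (R i).u := by
    classical
    -- basic facts about lam
    have hlam0 : (0:ℝ) < lam := lt_trans one_pos hlam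
    have hlaminv : (0:ℝ) < lam⁻¹ := inv_pos.mpr hlam0
    have hinvlt : lam⁻¹ < 1 := by
      have h1 : lam⁻¹ * lam = 1 := inv_mul_cancel₀ (ne_of_gt hlam0)
      nlinarith
    -- convenient facts about actR
    have hact_add : ∀ (C : Matrix (Fin 2) (Fin 2) ℤ) (v w : V),
        actR C (v + w) = actR C v + actR C w := fun C v w => Matrix.mulVec_add _ _ _
    have hact_smul : ∀ (C : Matrix (Fin 2) (Fin 2) ℤ) (c : ℝ) (v : V),
        actR C (c • v) = c • actR C v := fun C c v => Matrix.mulVec_smul _ _ _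
    -- linear independence of the eigenvectors
    have hindep : LinearIndependent ℝ ![vs, vu] := by
      rw [LinearIndependent.pair_iff]
      intro s t hst
      have h2 : (s * lam⁻¹) • vs + (t * lam) • vu = 0 := by
        have h := congrArg (actR A) hst
        rw [show actR A 0 = 0 from Matrix.mulVec_zero _] at h
        rw [hact_add, hact_smul, hact_smul, hAs, hAu, smul_smul, smul_smul] at h
        exact h
      have h3 : (t * lam - t * lam⁻¹) • vu = 0 := by
        have hkey : (t * lam - t * lam⁻¹) • vu
            = ((s * lam⁻¹) • vs + (t * lam) • vu) - lam⁻¹ • (s • vs + t • vu) := by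
          funext i
          simp only [Pi.add_apply, Pi.sub_apply, Pi.smul_apply, smul_eq_mul]
          ring
        rw [hkey, h2, hst, smul_zero, zero_sub, neg_zero]
      have ht : t = 0 := by
        rcases smul_eq_zero.mp h3 with h | h
        · have h' : t * (lam - lam⁻¹) = 0 := by linarith [h]
          rcases mul_eq_zero.mp h' with h'' | h''
          · exact h''
          · exfalso; nlinarith
        · exact absurd h hvu
      refine ⟨?_, ht⟩
      rw [ht, zero_smul, add_zero] at hst
      rcases smul_eq_zero.mp hst with h | h
      · exact h
      · exact absurd h hvs
    -- coordinates with respect to the eigenbasis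
    obtain ⟨sg, bt, hdecomp, hcoord⟩ :
        ∃ sg bt : V → ℝ, (∀ v : V, v = sg v • vs + bt v • vu) ∧
          (∀ a c : ℝ, sg (a • vs + c • vu) = a ∧ bt (a • vs + c • vu) = c) := by
      have hcard : Fintype.card (Fin 2) = Module.finrank ℝ V := by simp
      set b : Module.Basis (Fin 2) ℝ V := basisOfLinearIndependentOfCardEqFinrank hindep hcard
        with hbdef
      have hb0 : b 0 = vs := by
        rw [hbdef, coe_basisOfLinearIndependentOfCardEqFinrank]; rfl
      have hb1 : b 1 = vu := by
        rw [hbdef, coe_basisOfLinearIndependentOfCardEqFinrank]; rfl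
      refine ⟨fun v => b.repr v 0, fun v => b.repr v 1, ?_, ?_⟩
      · intro v
        have h := b.sum_repr v
        rw [Fin.sum_univ_two, hb0, hb1] at h
        exact h.symm
      · intro a c
        have h : a • vs + c • vu = a • b 0 + c • b 1 := by rw [hb0, hb1]
        rw [h]
        constructor <;>
          simp [map_add, _root_.map_smul, Module.Basis.repr_self_apply, Finsupp.add_apply,
            Finsupp.smul_apply, smul_eq_mul]
    -- uniqueness of coordinates
    have huniq : ∀ (v : V) (a c : ℝ), v = a • vs + c • vu → sg v = a ∧ bt v = c := by
      intro v a c h; rw [h]; exact hcoord a c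
    have heqc : ∀ v w : V, sg v = sg w → bt v = bt w → v = w := by
      intro v w h1 h2
      calc v = sg v • vs + bt v • vu := hdecomp v
        _ = sg w • vs + bt w • vu := by rw [h1, h2]
        _ = w := (hdecomp w).symm
    -- linearity of the coordinates
    have hadd : ∀ v w : V, sg (v + w) = sg v + sg w ∧ bt (v + w) = bt v + bt w := by
      intro v w
      apply huniq
      conv_lhs => rw [hdecomp v, hdecomp w]
      funext i
      simp only [Pi.add_apply, Pi.smul_apply, smul_eq_mul]
      ring
    have hsmul : ∀ (c : ℝ) (v : V), sg (c • v) = c * sg v ∧ bt (c • v) = c * bt v := by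
      intro c v
      apply huniq
      conv_lhs => rw [hdecomp v]
      funext i
      simp only [Pi.add_apply, Pi.smul_apply, smul_eq_mul]
      ring
    have hzero : sg 0 = 0 ∧ bt 0 = 0 := by
      apply huniq; funext i; simp
    have hneg : ∀ v : V, sg (-v) = -sg v ∧ bt (-v) = -bt v := by
      intro v
      have h := hadd v (-v)
      rw [add_neg_cancel] at h
      constructor <;> [linarith [h.1, hzero.1]; linarith [h.2, hzero.2]]
    have hsub : ∀ v w : V, sg (v - w) = sg v - sg w ∧ bt (v - w) = bt v - bt w := by
      intro v w
      have h1 := hadd v (-w)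
      have h2 := hneg w
      rw [← sub_eq_add_neg] at h1
      constructor <;> [linarith [h1.1, h2.1]; linarith [h1.2, h2.2]]
    have hvs1 : sg vs = 1 ∧ bt vs = 0 := by
      apply huniq; funext i; simp
    have hvu1 : sg vu = 0 ∧ bt vu = 1 := by
      apply huniq; funext i; simp
    -- coordinates of affine combinations
    have hco1 : ∀ (q : V) (a c : ℝ), sg (q + a • vs + c • vu) = sg q + a ∧
        bt (q + a • vs + c • vu) = bt q + c := by
      intro q a c
      have h1 := hadd (q + a • vs) (c • vu)
      have h2 := hadd q (a • vs)
      have h3 := hsmul a vs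
      have h4 := hsmul c vu
      constructor
      · rw [h1.1, h2.1, h3.1, h4.1, hvs1.1, hvu1.1]; ring
      · rw [h1.2, h2.2, h3.2, h4.2, hvs1.2, hvu1.2]; ring
    have hco2 : ∀ (q : V) (a : ℝ), sg (q + a • vs) = sg q + a ∧
        bt (q + a • vs) = bt q := by
      intro q a
      have h2 := hadd q (a • vs)
      have h3 := hsmul a vs
      constructor
      · rw [h2.1, h3.1, hvs1.1]; ring
      · rw [h2.2, h3.2, hvs1.2]; ring
    -- action of A on the coordinates
    have hact : ∀ v : V, sg (actR A v) = lam⁻¹ * sg v ∧ bt (actR A v) = lam * bt v := by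
      intro v
      apply huniq
      conv_lhs => rw [hdecomp v]
      rw [hact_add, hact_smul, hact_smul, hAs, hAu]
      funext i
      simp only [Pi.add_apply, Pi.smul_apply, smul_eq_mul]
      ring
    -- lattice closure properties
    have hlat_add : ∀ {v w : V}, v ∈ lattice → w ∈ lattice → v + w ∈ lattice := by
      rintro v w ⟨k, rfl⟩ ⟨l, rfl⟩
      exact ⟨k + l, by funext i; push_cast; simp⟩
    have hlat_neg : ∀ {v : V}, v ∈ lattice → -v ∈ lattice := by
      rintro v ⟨k, rfl⟩
      exact ⟨-k, by funext i; push_cast; simp⟩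
    have hlat_sub : ∀ {v w : V}, v ∈ lattice → w ∈ lattice → v - w ∈ lattice := by
      intro v w hv hw
      rw [sub_eq_add_neg]; exact hlat_add hv (hlat_neg hw)
    have hlat_zsmul : ∀ (j : ℤ) {v : V}, v ∈ lattice → (j : ℝ) • v ∈ lattice := by
      rintro j v ⟨k, rfl⟩
      refine ⟨fun i => j * k i, ?_⟩
      funext i
      push_cast
      simp [Pi.smul_apply, smul_eq_mul]
    have hlat_map : ∀ (C : Matrix (Fin 2) (Fin 2) ℤ) {v : V}, v ∈ lattice →
        actR C v ∈ lattice := by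
      rintro C v ⟨k, rfl⟩
      refine ⟨C.mulVec k, ?_⟩
      funext i
      show ((C.mulVec k i : ℤ) : ℝ) = actR C _ i
      simp only [actR, Matrix.mulVec, dotProduct, Fin.sum_univ_two,
        Matrix.map_apply]
      push_cast
      ring
    have hlat_iter : ∀ (n : ℕ) {v : V}, v ∈ lattice → (actR A)^[n] v ∈ lattice := by
      intro n
      induction n with
      | zero => intro v hv; simpa using hv
      | succ n ih =>
        intro v hv
        rw [Function.iterate_succ_apply']
        exact hlat_map A (ih hv)
    -- descent: no nonzero lattice vector contracts under an integer matrix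
    have hdescent : ∀ (C : Matrix (Fin 2) (Fin 2) ℤ) (m : V), m ∈ lattice →
        actR C m = lam⁻¹ • m → m = 0 := by
      intro C m hm hCm
      by_contra hm0
      obtain ⟨i, hi⟩ : ∃ i, m i ≠ 0 := by
        by_contra h; push_neg at h; exact hm0 (funext h)
      have hiter : ∀ n : ℕ, (actR C)^[n] m = (lam⁻¹) ^ n • m ∧ (actR C)^[n] m ∈ lattice := by
        intro n
        induction n with
        | zero => simpa using hm
        | succ n ih =>
          rw [Function.iterate_succ_apply']
          constructor
          · rw [ih.1, hact_smul, hCm, smul_smul, pow_succ]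
          · exact hlat_map C ih.2
      obtain ⟨n, hn⟩ := pow_unbounded_of_one_lt |m i| hlam
      obtain ⟨hq, k, hk⟩ := hiter n
      have h1 : ((k i : ℝ)) = (lam⁻¹) ^ n * m i := by
        have := congrFun hk i
        rw [hq] at this
        simpa [Pi.smul_apply, smul_eq_mul] using this
      have hp : (0:ℝ) < lam ^ n := pow_pos hlam0 n
      have hne : (k i : ℝ) ≠ 0 := by
        rw [h1]
        exact mul_ne_zero (pow_ne_zero _ (ne_of_gt hlaminv)) hi
      have hlt : |(k i : ℝ)| < 1 := by
        rw [h1, abs_mul, abs_pow, abs_inv, abs_of_pos hlam0, inv_pow]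
        calc (lam ^ n)⁻¹ * |m i| < (lam ^ n)⁻¹ * lam ^ n :=
              mul_lt_mul_of_pos_left hn (inv_pos.mpr hp)
          _ = 1 := inv_mul_cancel₀ (ne_of_gt hp)
      have hk0 : k i ≠ 0 := by exact_mod_cast hne
      have hk1 : |k i| < 1 := by exact_mod_cast (by rwa [← Int.cast_abs] at hlt : ((|k i| : ℤ) : ℝ) < 1)
      exact hk0 (Int.abs_lt_one_iff.mp hk1)
    -- the coordinates of a nonzero lattice vector never vanish
    have hD2 : ∀ m ∈ lattice, bt m = 0 → m = 0 := by
      intro m hm h0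
      apply hdescent A m hm
      have hm' := hdecomp m
      rw [h0, zero_smul, add_zero] at hm'
      rw [hm', hact_smul, hAs, smul_comm]
    have hD1 : ∀ m ∈ lattice, sg m = 0 → m = 0 := by
      intro m hm h0
      set C := A.adjugate with hCdef
      have hCA : ∀ v : V, actR C (actR A v) = v := by
        intro v
        show (C.map _) *ᵥ ((A.map _) *ᵥ v) = v
        rw [Matrix.mulVec_mulVec]
        have hmul : (C.map (Int.cast : ℤ → ℝ)) * (A.map (Int.cast : ℤ → ℝ)) = 1 := by
          have : C.map (Int.cast : ℤ → ℝ) = C.map ⇑(Int.castRingHom ℝ) := rfl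
          rw [this, show A.map (Int.cast : ℤ → ℝ) = A.map ⇑(Int.castRingHom ℝ) from rfl,
            ← Matrix.map_mul, hCdef, Matrix.adjugate_mul, hdet, one_smul]
          exact Matrix.map_one _ (by simp) (by simp)
        rw [hmul, Matrix.one_mulVec]
      have hCvu : actR C vu = lam⁻¹ • vu := by
        have h := hCA vu
        rw [hAu, hact_smul] at h
        have h2 := congrArg (fun w : V => lam⁻¹ • w) h
        simpa [smul_smul, inv_mul_cancel₀ (ne_of_gt hlam0)] using h2
      apply hdescent C m hm
      have hm' := hdecomp m
      rw [h0, zero_smul, zero_add] at hm'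
      rw [hm', hact_smul, hCvu, smul_comm]
    -- iterates of the coordinates
    have hsg_iter : ∀ (n : ℕ) (v : V), sg ((actR A)^[n] v) = (lam⁻¹) ^ n * sg v := by
      intro n v
      induction n with
      | zero => simp
      | succ n ih =>
        rw [Function.iterate_succ_apply', (hact _).1, ih, pow_succ]
        ring
    have hbt_iter : ∀ (n : ℕ) (v : V), bt ((actR A)^[n] v) = lam ^ n * bt v := by
      intro n v
      induction n with
      | zero => simp
      | succ n ih =>
        rw [Function.iterate_succ_apply', (hact _).2, ih, pow_succ]
        ring
    -- core lattice lemma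
    have hcore : ∀ m ∈ lattice, sg m ≠ 0 → ∀ B : ℝ, ∃ w ∈ lattice, ∃ c : ℝ,
        0 < c ∧ c ≤ 1 ∧ sg w = c * sg m ∧ B ≤ bt w ∧ 0 < bt w := by
      intro m hm hsm B
      obtain ⟨w₀, hw₀lat, c₀, hc₀0, hc₀1, hw₀sg, hw₀bt⟩ :
          ∃ w₀ ∈ lattice, ∃ c₀ : ℝ, 0 < c₀ ∧ c₀ ≤ 1 ∧ sg w₀ = c₀ * sg m ∧ 0 < bt w₀ := by
        have hm0 : m ≠ 0 := fun h => hsm (by rw [h]; exact hzero.1)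
        have hbtm : bt m ≠ 0 := fun h => hm0 (hD2 m hm h)
        rcases lt_or_gt_of_ne hbtm with hnegb | hposb
        · refine ⟨m - actR A m, hlat_sub hm (hlat_map A hm), 1 - lam⁻¹, by linarith,
            by linarith, ?_, ?_⟩
          · rw [(hsub _ _).1, (hact m).1]; ring
          · rw [(hsub _ _).2, (hact m).2]; nlinarith
        · exact ⟨m, hm, 1, one_pos, le_refl 1, (one_mul _).symm, hposb⟩
      obtain ⟨n, hn⟩ := pow_unbounded_of_one_lt (B / bt w₀) hlam
      refine ⟨(actR A)^[n] w₀, hlat_iter n hw₀lat, (lam⁻¹) ^ n * c₀, ?_, ?_, ?_, ?_, ?_⟩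
      · positivity
      · calc (lam⁻¹) ^ n * c₀ ≤ 1 * 1 := by
              apply mul_le_mul _ hc₀1 (le_of_lt hc₀0) zero_le_one
              exact pow_le_one₀ (le_of_lt hlaminv) (le_of_lt hinvlt)
          _ = 1 := one_mul 1
      · rw [hsg_iter, hw₀sg]; ring
      · rw [hbt_iter]
        rw [div_lt_iff₀ hw₀bt] at hn
        linarith
      · rw [hbt_iter]
        positivity
    -- small seeds of both signs
    have hseed : ∀ ε : ℝ, 0 < ε → ∃ mp ∈ lattice, ∃ mn ∈ lattice,
        0 < sg mp ∧ sg mp < ε ∧ -ε < sg mn ∧ sg mn < 0 := by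
      intro ε hε
      set e : V := fun i => ((![1, 0] : Fin 2 → ℤ) i : ℝ) with he
      have helat : e ∈ lattice := ⟨![1, 0], rfl⟩
      have hse : sg e ≠ 0 := by
        intro h
        have h2 := hD1 e helat h
        have h3 : e 0 = 0 := by rw [h2]; rfl
        rw [he] at h3
        norm_num at h3
      obtain ⟨n, hn⟩ := pow_unbounded_of_one_lt (|sg e| / ε) hlam
      set w := (actR A)^[n] e with hw
      have hwlat : w ∈ lattice := hlat_iter n helat
      have hwsg : sg w = (lam⁻¹) ^ n * sg e := hsg_iter n e
      have hp : (0:ℝ) < lam ^ n := pow_pos hlam0 n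
      have habs : |sg w| < ε := by
        rw [hwsg, abs_mul, abs_pow, abs_inv, abs_of_pos hlam0, inv_pow]
        rw [div_lt_iff₀ hε] at hn
        rw [inv_mul_lt_iff₀ hp]
        nlinarith
      have hwne : sg w ≠ 0 := by
        rw [hwsg]
        exact mul_ne_zero (pow_ne_zero _ (ne_of_gt hlaminv)) hse
      rcases lt_or_gt_of_ne hwne with h | h
      · refine ⟨-w, hlat_neg hwlat, w, hwlat, ?_, ?_, ?_, h⟩
        · rw [(hneg w).1]; linarith
        · rw [(hneg w).1]; rw [abs_of_neg h] at habs; linarith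
        · rw [abs_of_neg h] at habs; linarith
      · refine ⟨w, hwlat, -w, hlat_neg hwlat, h, ?_, ?_, ?_⟩
        · rw [abs_of_pos h] at habs; linarith
        · rw [(hneg w).1]; rw [abs_of_pos h] at habs; linarith
        · rw [(hneg w).1]; linarith
    -- arithmetic hitting lemma
    have hhit : ∀ c s τ : ℝ, 0 < τ → τ ≤ s → τ ≤ c + s →
        ∃ j : ℤ, 1 ≤ j ∧ c ≤ (j : ℝ) * τ ∧ (j : ℝ) * τ ≤ c + s := by
      intro c s τ hτ hτs hcs
      by_cases hc : c ≤ τ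
      · exact ⟨1, le_refl 1, by simpa using hc, by simpa using hcs⟩
      · push_neg at hc
        have hcpos : 0 < c := lt_trans hτ hc
        have hdiv : (1:ℝ) < c / τ := (one_lt_div hτ).mpr hc
        have hle := Int.le_ceil (c / τ)
        have hlt := Int.ceil_lt_add_one (c / τ)
        refine ⟨⌈c / τ⌉, ?_, ?_, ?_⟩
        · have h1 : (1:ℝ) < (⌈c / τ⌉ : ℝ) := lt_of_lt_of_le hdiv hle
          exact_mod_cast le_of_lt h1
        · calc c = (c / τ) * τ := by field_simp
            _ ≤ (⌈c / τ⌉ : ℝ) * τ := mul_le_mul_of_nonneg_right hle (le_of_lt hτ)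
        · calc (⌈c / τ⌉ : ℝ) * τ ≤ (c / τ + 1) * τ :=
              mul_le_mul_of_nonneg_right (le_of_lt hlt) (le_of_lt hτ)
            _ = c + τ := by field_simp
            _ ≤ c + s := by linarith
    -- main lattice lemma
    have hmain : ∀ (α B s : ℝ), 0 < s → ∃ m ∈ lattice,
        α ≤ sg m ∧ sg m ≤ α + s ∧ B ≤ bt m := by
      intro α B s hs
      obtain ⟨mp, hmp, mn, hmn, h1, h2, h3, h4⟩ := hseed (s / 2) (by linarith)
      obtain ⟨wp, hwp, cp, hcp0, hcp1, hwpsg, hwpB, hwpbt⟩ :=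
        hcore mp hmp (ne_of_gt h1) (max B 0)
      obtain ⟨wn, hwn, cn, hcn0, hcn1, hwnsg, hwnB, hwnbt⟩ :=
        hcore mn hmn (ne_of_lt h4) (max B 0)
      have hwp1 : 0 < sg wp := by rw [hwpsg]; exact mul_pos hcp0 h1
      have hwp2 : sg wp < s / 2 := by rw [hwpsg]; nlinarith
      have hwn1 : sg wn < 0 := by rw [hwnsg]; exact mul_neg_of_pos_of_neg hcn0 h4
      have hwn2 : -(s / 2) < sg wn := by rw [hwnsg]; nlinarith
      have hBle : B ≤ max B 0 := le_max_left B 0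
      have hB0 : (0:ℝ) ≤ max B 0 := le_max_right B 0
      by_cases hcase : sg wp ≤ α + s
      · obtain ⟨j, hj1, hj2, hj3⟩ := hhit α s (sg wp) hwp1 (by linarith) hcase
        have hj1' : (1:ℝ) ≤ (j : ℝ) := by exact_mod_cast hj1
        refine ⟨(j : ℝ) • wp, hlat_zsmul j hwp, ?_, ?_, ?_⟩
        · rw [(hsmul _ _).1]; exact hj2
        · rw [(hsmul _ _).1]; exact hj3
        · rw [(hsmul _ _).2]; nlinarith
      · push_neg at hcase
        have hα : α < -(s / 2) := by linarith
        set τ := -sg wn with hτdef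
        have hτpos : 0 < τ := by simp [hτdef]; linarith
        obtain ⟨j, hj1, hj2, hj3⟩ := hhit (-(α + s)) s τ hτpos (by simp [hτdef]; linarith)
          (by simp [hτdef]; linarith)
        have hj1' : (1:ℝ) ≤ (j : ℝ) := by exact_mod_cast hj1
        have hsgwn : sg wn = -τ := by simp [hτdef]
        refine ⟨(j : ℝ) • wn, hlat_zsmul j hwn, ?_, ?_, ?_⟩
        · rw [(hsmul _ _).1, hsgwn]; linarith
        · rw [(hsmul _ _).1, hsgwn]; linarith
        · rw [(hsmul _ _).2]; nlinarith
    -- extract the staircase data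
    obtain ⟨hquad, Del, hstring, hR0, hsubr, htop, C, hC⟩ := hst
    -- step relations between consecutive rectangles
    have hstep : ∀ i : ℕ, bt ((R (i+1)).p) = bt ((R i).p) + (R i).u ∧
        sg ((R (i+1)).p) ≤ sg ((R i).p) ∧
        sg ((R i).p) + (R i).s ≤ sg ((R (i+1)).p) + (R (i+1)).s := by
      intro i
      obtain ⟨a0, ha00, ha01, heq0⟩ := htop i ⟨0, le_refl 0, (R i).s_pos.le, rfl⟩
      obtain ⟨a1, ha10, ha11, heq1⟩ := htop i ⟨(R i).s, (R i).s_pos.le, le_refl _, rfl⟩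
      have g0 := congrArg sg heq0
      rw [(hco1 _ _ _).1, (hco2 _ _).1] at g0
      have b0 := congrArg bt heq0
      rw [(hco1 _ _ _).2, (hco2 _ _).2] at b0
      have g1 := congrArg sg heq1
      rw [(hco1 _ _ _).1, (hco2 _ _).1] at g1
      refine ⟨by linarith, by linarith, by linarith⟩
    -- cumulative relations
    have hcum : ∀ n : ℕ, bt ((R n).p) = bt ((R 0).p) + (∑ i ∈ Finset.range n, (R i).u) ∧
        sg ((R n).p) ≤ sg ((R 0).p) ∧
        sg ((R 0).p) + (R 0).s ≤ sg ((R n).p) + (R n).s := by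
      intro n
      induction n with
      | zero => simp
      | succ n ih =>
        obtain ⟨hs1, hs2, hs3⟩ := hstep n
        refine ⟨?_, by linarith [ih.2.1], by linarith [ih.2.2]⟩
        rw [Finset.sum_range_succ, hs1, ih.1]
        ring
    -- the contradiction
    by_contra hsum
    have hpos : ∀ n : ℕ, 0 ≤ (R n).u := fun n => (R n).u_pos.le
    have htend := (not_summable_iff_tendsto_nat_atTop_of_nonneg hpos).mp hsum
    obtain ⟨y, hy⟩ := hYne
    obtain ⟨m, hmlat, hm1, hm2, hm3⟩ := hmain (sg ((R 0).p) - sg y)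
      (bt ((R 0).p) - bt y) ((R 0).s) (R 0).s_pos
    set t : ℝ := bt y + bt m - bt ((R 0).p) with htdef
    have ht0 : 0 ≤ t := by simp [htdef]; linarith
    set S : ℕ → ℝ := fun n => ∑ i ∈ Finset.range n, (R i).u with hSdef
    have hex : ∃ N, t < S N := (htend.eventually_gt_atTop t).exists
    set N := Nat.find hex with hNdef
    have hNspec : t < S N := Nat.find_spec hex
    have hN0 : N ≠ 0 := by
      intro h
      rw [h] at hNspec
      simp only [hSdef, Finset.range_zero, Finset.sum_empty] at hNspec
      linarith
    obtain ⟨n, hn⟩ : ∃ n, N = n + 1 := ⟨N - 1, (Nat.succ_pred_eq_of_ne_zero hN0).symm⟩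
    have hSn : S n ≤ t := by
      by_contra h
      push_neg at h
      exact Nat.find_min hex (by omega) h
    have hSn1 : t < S n + (R n).u := by
      have : S (n + 1) = S n + (R n).u := Finset.sum_range_succ _ _
      rw [hn, this] at hNspec
      exact hNspec
    obtain ⟨hcb, hcs1, hcs2⟩ := hcum n
    -- the translated point of Y lies in the n-th rectangle
    have hmem : y + m ∈ (R n).carrier vs vu := by
      refine ⟨sg y + sg m - sg ((R n).p), t - S n, by linarith, by linarith,
        by linarith, by linarith, ?_⟩
      apply heqc
      · rw [(hadd y m).1, (hco1 _ _ _).1]; ring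
      · rw [(hadd y m).2, (hco1 _ _ _).2, hcb, htdef]; ring
    have hYmem : y + m ∈ Y := by
      obtain ⟨F, hF, hYF⟩ := hYfin
      rw [hYF] at hy ⊢
      rw [Set.mem_add] at hy ⊢
      obtain ⟨f, hf, l, hl, hfl⟩ := hy
      exact ⟨f, hf, l + m, hlat_add hl hmlat, by rw [← add_assoc, hfl]⟩
    exact Set.disjoint_left.mp (hdisj n) hmem hYmem

end Paper
end

section
/- Let A be a 2×2 integer matrix with determinant 1 and trace > 2, and let 𝒳, 𝒴 ⊆ 𝕋² be disjoint nonempty finite f_A-invariant sets. Then: (i) for every primitive positive 𝒳-rectangle Δ disjoint from the lift 𝒴̃ there exists a unique rectangle D(Δ) such that Δ is a right horizontal subrectangle of D(Δ), the interior of D(Δ) is disjoint from 𝒴̃, and the left unstable side of D(Δ) contains a point of 𝒴̃; and (ii) there exist constants 1 < c < C such that c < ℓ^s(D(Δ))/ℓ^s(Δ) < C for every such Δ. -/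
/- Common setup: following the paper, we identify each subset of the torus
`𝕋² = ℝ²/ℤ²` with its (`ℤ²`-saturated) lift to `ℝ²`. -/

open Matrix Set
open scoped Pointwise

namespace Paper

/-! ### Auxiliary development -/

section Aux

/-- A bundle of the standing hypotheses. -/
structure Setup where
  A : Matrix (Fin 2) (Fin 2) ℤ
  hdet : A.det = 1
  lam : ℝ
  hlam : 1 < lam
  vs : V
  vu : V
  hvs : vs ≠ 0
  hvu : vu ≠ 0
  hAs : actR A vs = lam⁻¹ • vs
  hAu : actR A vu = lam • vu

namespace Setup

variable (S : Setup)

lemma lam_pos : 0 < S.lam := lt_trans one_pos S.hlam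
lemma lam_ne : S.lam ≠ 0 := ne_of_gt S.lam_pos
lemma lam_inv_pos : 0 < S.lam⁻¹ := inv_pos.2 S.lam_pos
lemma lam_inv_lt_one : S.lam⁻¹ < 1 := inv_lt_one_of_one_lt₀ S.hlam

/-- The inverse matrix. -/
def B : Matrix (Fin 2) (Fin 2) ℤ := S.A.adjugate

lemma actR_add (M : Matrix (Fin 2) (Fin 2) ℤ) (v w : V) :
    actR M (v + w) = actR M v + actR M w := Matrix.mulVec_add _ _ _

lemma actR_smul (M : Matrix (Fin 2) (Fin 2) ℤ) (c : ℝ) (v : V) :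
    actR M (c • v) = c • actR M v := Matrix.mulVec_smul _ _ _

lemma actR_sub (M : Matrix (Fin 2) (Fin 2) ℤ) (v w : V) :
    actR M (v - w) = actR M v - actR M w := by
  rw [sub_eq_add_neg, ← neg_one_smul ℝ w, actR_add, actR_smul, neg_one_smul, ← sub_eq_add_neg]

lemma actR_actR (M N : Matrix (Fin 2) (Fin 2) ℤ) (v : V) :
    actR M (actR N v) = actR (M * N) v := by
  unfold actR
  have h : (M.map (Int.cast : ℤ → ℝ)) * (N.map Int.cast) = (M * N).map Int.cast := by
    simpa using (Matrix.map_mul (L := M) (M := N) (f := Int.castRingHom ℝ)).symm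
  rw [Matrix.mulVec_mulVec, h]

lemma actR_one (v : V) : actR 1 v = v := by
  unfold actR
  have : (1 : Matrix (Fin 2) (Fin 2) ℤ).map (Int.cast : ℤ → ℝ) = 1 := by
    ext i j; by_cases h : i = j <;> simp [Matrix.one_apply, h]
  rw [this, Matrix.one_mulVec]

lemma actR_B_A (v : V) : actR S.B (actR S.A v) = v := by
  rw [actR_actR]
  show actR (S.A.adjugate * S.A) v = v
  rw [Matrix.adjugate_mul, S.hdet]; simp [actR_one]

lemma actR_A_B (v : V) : actR S.A (actR S.B v) = v := by
  rw [actR_actR]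
  show actR (S.A * S.A.adjugate) v = v
  rw [Matrix.mul_adjugate, S.hdet]; simp [actR_one]

lemma actA_inj : Function.Injective (actR S.A) :=
  Function.LeftInverse.injective (g := actR S.B) S.actR_B_A

lemma actB_inj : Function.Injective (actR S.B) :=
  Function.LeftInverse.injective (g := actR S.A) S.actR_A_B

lemma hBs : actR S.B S.vs = S.lam • S.vs := by
  have h := congrArg (actR S.B) S.hAs
  rw [S.actR_B_A, actR_smul] at h
  have := congrArg (fun w => S.lam • w) h
  simpa [smul_smul, mul_inv_cancel₀ S.lam_ne] using this.symm

lemma hBu : actR S.B S.vu = S.lam⁻¹ • S.vu := by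
  have h := congrArg (actR S.B) S.hAu
  rw [S.actR_B_A, actR_smul] at h
  have := congrArg (fun w => S.lam⁻¹ • w) h
  simpa [smul_smul, inv_mul_cancel₀ S.lam_ne] using this.symm

/-! #### Coordinates -/

lemma indep (c : ℝ) : S.vu ≠ c • S.vs := by
  intro h
  have hc : c ≠ 0 := by rintro rfl; exact S.hvu (by simpa using h)
  have h1 : actR S.A S.vu = c • actR S.A S.vs := by rw [h, actR_smul]
  rw [S.hAs, S.hAu, h, smul_smul, smul_smul] at h1
  have h2 : (S.lam * c - c * S.lam⁻¹) • S.vs = 0 := by rw [sub_smul, h1, sub_self]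
  rcases smul_eq_zero.1 h2 with h3 | h3
  · have h4 : S.lam * c = c * S.lam⁻¹ := by linarith [sub_eq_zero.1 h3]
    have h5 : S.lam = S.lam⁻¹ := by
      rw [mul_comm] at h4
      exact mul_left_cancel₀ hc h4
    have h6 : S.lam * S.lam = 1 := by
      nth_rewrite 2 [h5]
      exact mul_inv_cancel₀ S.lam_ne
    nlinarith [S.hlam]
  · exact S.hvs h3

/-- The determinant of the basis `(vs, vu)`. -/
noncomputable def dd : ℝ := S.vs 0 * S.vu 1 - S.vs 1 * S.vu 0

lemma dd_ne : S.dd ≠ 0 := by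
  intro h
  unfold dd at h
  by_cases h0 : S.vs 0 = 0
  · have h1 : S.vs 1 ≠ 0 := by
      intro h1; apply S.hvs; funext i; fin_cases i <;> simpa [h0]
    have h2 : S.vu 0 = 0 := by
      have h3 : S.vs 1 * S.vu 0 = 0 := by rw [h0] at h; linarith
      exact (mul_eq_zero.1 h3).resolve_left h1
    apply S.indep (S.vu 1 / S.vs 1)
    funext i; fin_cases i <;> simp [h0, h2] <;> field_simp
  · apply S.indep (S.vu 0 / S.vs 0)
    funext i
    fin_cases i
    · show S.vu 0 = S.vu 0 / S.vs 0 * S.vs 0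
      field_simp
    · show S.vu 1 = S.vu 0 / S.vs 0 * S.vs 1
      field_simp
      nlinarith [h]

/-- Stable coordinate. -/
noncomputable def cs (v : V) : ℝ := (v 0 * S.vu 1 - v 1 * S.vu 0) / S.dd

/-- Unstable coordinate. -/
noncomputable def cu (v : V) : ℝ := (S.vs 0 * v 1 - S.vs 1 * v 0) / S.dd

lemma cs_add (v w : V) : S.cs (v + w) = S.cs v + S.cs w := by
  unfold cs; field_simp [S.dd_ne]; simp only [Pi.add_apply]; ring

lemma cu_add (v w : V) : S.cu (v + w) = S.cu v + S.cu w := by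
  unfold cu; field_simp [S.dd_ne]; simp only [Pi.add_apply]; ring

lemma cs_smul (c : ℝ) (v : V) : S.cs (c • v) = c * S.cs v := by
  unfold cs; field_simp; simp only [Pi.smul_apply, smul_eq_mul]; ring

lemma cu_smul (c : ℝ) (v : V) : S.cu (c • v) = c * S.cu v := by
  unfold cu; field_simp; simp only [Pi.smul_apply, smul_eq_mul]; ring

lemma cs_zero : S.cs 0 = 0 := by unfold cs; simp

lemma cu_zero : S.cu 0 = 0 := by unfold cu; simp

lemma cs_neg (v : V) : S.cs (-v) = - S.cs v := by
  have := S.cs_smul (-1) v; simpa using this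

lemma cu_neg (v : V) : S.cu (-v) = - S.cu v := by
  have := S.cu_smul (-1) v; simpa using this

lemma cs_sub (v w : V) : S.cs (v - w) = S.cs v - S.cs w := by
  rw [sub_eq_add_neg, cs_add, cs_neg, ← sub_eq_add_neg]

lemma cu_sub (v w : V) : S.cu (v - w) = S.cu v - S.cu w := by
  rw [sub_eq_add_neg, cu_add, cu_neg, ← sub_eq_add_neg]

lemma cs_vs : S.cs S.vs = 1 := by
  unfold cs; rw [div_eq_one_iff_eq S.dd_ne]; rfl

lemma cs_vu : S.cs S.vu = 0 := by
  unfold cs; rw [div_eq_zero_iff]; left; ring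

lemma cu_vs : S.cu S.vs = 0 := by
  unfold cu; rw [div_eq_zero_iff]; left; ring

lemma cu_vu : S.cu S.vu = 1 := by
  unfold cu; rw [div_eq_one_iff_eq S.dd_ne]; unfold dd; ring

lemma cs_comb (a b : ℝ) : S.cs (a • S.vs + b • S.vu) = a := by
  rw [cs_add, cs_smul, cs_smul, cs_vs, cs_vu]; ring

lemma cu_comb (a b : ℝ) : S.cu (a • S.vs + b • S.vu) = b := by
  rw [cu_add, cu_smul, cu_smul, cu_vs, cu_vu]; ring

lemma recon (v : V) : v = S.cs v • S.vs + S.cu v • S.vu := by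
  funext i
  have hd := S.dd_ne
  fin_cases i
  · show v 0 = S.cs v * S.vs 0 + S.cu v * S.vu 0
    unfold cs cu
    field_simp
    unfold dd
    ring
  · show v 1 = S.cs v * S.vs 1 + S.cu v * S.vu 1
    unfold cs cu
    field_simp
    unfold dd
    ring

lemma point_comb {q p : V} {a b : ℝ} :
    q = p + a • S.vs + b • S.vu ↔ S.cs (q - p) = a ∧ S.cu (q - p) = b := by
  constructor
  · rintro rfl
    have : p + a • S.vs + b • S.vu - p = a • S.vs + b • S.vu := by abel
    rw [this, S.cs_comb, S.cu_comb]; exact ⟨rfl, rfl⟩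
  · rintro ⟨ha, hb⟩
    have h := S.recon (q - p)
    rw [ha, hb] at h
    have : q = p + (q - p) := by abel
    rw [this, h, ← add_assoc]

/-- A bound for the coordinate functionals. -/
noncomputable def kap : ℝ :=
  (|S.vu 1| + |S.vu 0| + |S.vs 0| + |S.vs 1|) / |S.dd| + 1

lemma one_le_kap : 1 ≤ S.kap := by
  unfold kap
  have : 0 ≤ (|S.vu 1| + |S.vu 0| + |S.vs 0| + |S.vs 1|) / |S.dd| := by positivity
  linarith

lemma kap_pos : 0 < S.kap := lt_of_lt_of_le one_pos S.one_le_kap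

lemma abs_cs_le (v : V) : |S.cs v| ≤ S.kap * ‖v‖ := by
  have h0 : |v 0| ≤ ‖v‖ := by simpa [Real.norm_eq_abs] using norm_le_pi_norm v 0
  have h1 : |v 1| ≤ ‖v‖ := by simpa [Real.norm_eq_abs] using norm_le_pi_norm v 1
  have hd : 0 < |S.dd| := abs_pos.2 S.dd_ne
  have hn : (0:ℝ) ≤ ‖v‖ := norm_nonneg v
  unfold cs
  rw [abs_div, div_le_iff₀ hd]
  have hnum : |v 0 * S.vu 1 - v 1 * S.vu 0| ≤ |v 0| * |S.vu 1| + |v 1| * |S.vu 0| :=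
    (abs_sub _ _).trans (by rw [abs_mul, abs_mul])
  have hk : S.kap * ‖v‖ * |S.dd| = (|S.vu 1| + |S.vu 0| + |S.vs 0| + |S.vs 1|) * ‖v‖ + ‖v‖ * |S.dd| := by
    unfold kap; field_simp
  rw [hk]
  nlinarith [abs_nonneg (S.vu 1), abs_nonneg (S.vu 0), abs_nonneg (S.vs 0), abs_nonneg (S.vs 1),
    mul_le_mul_of_nonneg_right h0 (abs_nonneg (S.vu 1)),
    mul_le_mul_of_nonneg_right h1 (abs_nonneg (S.vu 0)),
    mul_nonneg hn hd.le]

lemma abs_cu_le (v : V) : |S.cu v| ≤ S.kap * ‖v‖ := by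
  have h0 : |v 0| ≤ ‖v‖ := by simpa [Real.norm_eq_abs] using norm_le_pi_norm v 0
  have h1 : |v 1| ≤ ‖v‖ := by simpa [Real.norm_eq_abs] using norm_le_pi_norm v 1
  have hd : 0 < |S.dd| := abs_pos.2 S.dd_ne
  have hn : (0:ℝ) ≤ ‖v‖ := norm_nonneg v
  unfold cu
  rw [abs_div, div_le_iff₀ hd]
  have hnum : |S.vs 0 * v 1 - S.vs 1 * v 0| ≤ |S.vs 0| * |v 1| + |S.vs 1| * |v 0| :=
    (abs_sub _ _).trans (by rw [abs_mul, abs_mul])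
  have hk : S.kap * ‖v‖ * |S.dd| = (|S.vu 1| + |S.vu 0| + |S.vs 0| + |S.vs 1|) * ‖v‖ + ‖v‖ * |S.dd| := by
    unfold kap; field_simp
  rw [hk]
  nlinarith [abs_nonneg (S.vu 1), abs_nonneg (S.vu 0), abs_nonneg (S.vs 0), abs_nonneg (S.vs 1),
    mul_le_mul_of_nonneg_left h1 (abs_nonneg (S.vs 0)),
    mul_le_mul_of_nonneg_left h0 (abs_nonneg (S.vs 1)),
    mul_nonneg hn hd.le]

lemma norm_le_coords (v : V) : ‖v‖ ≤ |S.cs v| * ‖S.vs‖ + |S.cu v| * ‖S.vu‖ := by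
  conv_lhs => rw [S.recon v]
  refine (norm_add_le _ _).trans ?_
  rw [norm_smul, norm_smul]
  simp [Real.norm_eq_abs]

lemma actA_comb (v : V) :
    actR S.A v = (S.cs v * S.lam⁻¹) • S.vs + (S.cu v * S.lam) • S.vu := by
  conv_lhs => rw [S.recon v]
  rw [actR_add, actR_smul, actR_smul, S.hAs, S.hAu, smul_smul, smul_smul]

lemma actB_comb (v : V) :
    actR S.B v = (S.cs v * S.lam) • S.vs + (S.cu v * S.lam⁻¹) • S.vu := by
  conv_lhs => rw [S.recon v]
  rw [actR_add, actR_smul, actR_smul, S.hBs, S.hBu, smul_smul, smul_smul]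

lemma cs_actA (v : V) : S.cs (actR S.A v) = S.lam⁻¹ * S.cs v := by
  rw [S.actA_comb v, cs_comb]; ring

lemma cu_actA (v : V) : S.cu (actR S.A v) = S.lam * S.cu v := by
  rw [S.actA_comb v, cu_comb]; ring

lemma cs_actB (v : V) : S.cs (actR S.B v) = S.lam * S.cs v := by
  rw [S.actB_comb v, cs_comb]; ring

lemma cu_actB (v : V) : S.cu (actR S.B v) = S.lam⁻¹ * S.cu v := by
  rw [S.actB_comb v, cu_comb]; ring


/-! #### Lattice lemmas -/

lemma lattice_zero : (0 : V) ∈ lattice := ⟨0, by funext i; simp⟩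

lemma lattice_add {m m' : V} (h : m ∈ lattice) (h' : m' ∈ lattice) : m + m' ∈ lattice := by
  obtain ⟨k, rfl⟩ := h
  obtain ⟨k', rfl⟩ := h'
  exact ⟨k + k', by funext i; push_cast; simp⟩

lemma lattice_neg {m : V} (h : m ∈ lattice) : -m ∈ lattice := by
  obtain ⟨k, rfl⟩ := h
  exact ⟨-k, by funext i; push_cast; simp⟩

lemma lattice_sub {m m' : V} (h : m ∈ lattice) (h' : m' ∈ lattice) : m - m' ∈ lattice := by
  rw [sub_eq_add_neg]; exact lattice_add h (lattice_neg h')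

lemma lattice_actR (M : Matrix (Fin 2) (Fin 2) ℤ) {m : V} (h : m ∈ lattice) :
    actR M m ∈ lattice := by
  obtain ⟨k, rfl⟩ := h
  refine ⟨M.mulVec k, ?_⟩
  funext i
  simp [actR, Matrix.mulVec, dotProduct, Fin.sum_univ_two, Matrix.map_apply]

lemma lattice_near (v : V) : ∃ m ∈ lattice, ‖v - m‖ ≤ 1/2 := by
  refine ⟨fun i => ((round (v i) : ℤ) : ℝ), ⟨fun i => round (v i), rfl⟩, ?_⟩
  rw [pi_norm_le_iff_of_nonneg (by norm_num)]
  intro i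
  simpa [Real.norm_eq_abs] using abs_sub_round (v i)

lemma finite_inter {G : Set V} (hG : G.Finite) (r : ℝ) :
    ((G + lattice) ∩ Metric.closedBall 0 r).Finite := by
  obtain ⟨RG, hRG⟩ := hG.isBounded.subset_closedBall 0
  set N : ℤ := ⌈r + RG⌉ with hN
  set K : Set (Fin 2 → ℤ) := Set.pi Set.univ (fun _ => Set.Icc (-N) N) with hK
  have hKfin : K.Finite := Set.Finite.pi (fun _ => Set.finite_Icc _ _)
  have hsub : ((G + lattice) ∩ Metric.closedBall 0 r) ⊆
      (fun gk : V × (Fin 2 → ℤ) => gk.1 + fun i => ((gk.2 i : ℤ) : ℝ)) '' (G ×ˢ K) := by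
    rintro v ⟨hv, hball⟩
    rw [Set.mem_add] at hv
    obtain ⟨g, hg, m, hm, hgm⟩ := hv
    obtain ⟨k, rfl⟩ := hm
    refine ⟨⟨g, k⟩, ⟨hg, ?_⟩, hgm⟩
    intro i _
    have hnv : ‖v‖ ≤ r := by simpa using hball
    have hng : ‖g‖ ≤ RG := by simpa using hRG hg
    have hv1 : |v i| ≤ r := le_trans (by simpa [Real.norm_eq_abs] using norm_le_pi_norm v i) hnv
    have hg1 : |g i| ≤ RG := le_trans (by simpa [Real.norm_eq_abs] using norm_le_pi_norm g i) hng
    have hcoord : ((k i : ℤ) : ℝ) = v i - g i := by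
      have := congrFun hgm i
      simp only [Pi.add_apply] at this
      linarith
    have h3 : |((k i : ℤ) : ℝ)| ≤ r + RG := by
      rw [hcoord]
      calc |v i - g i| ≤ |v i| + |g i| := abs_sub _ _
        _ ≤ r + RG := add_le_add hv1 hg1
    have h4 : |((k i : ℤ) : ℝ)| ≤ (N : ℝ) := h3.trans (by exact_mod_cast Int.le_ceil _)
    have h5 : |k i| ≤ N := by exact_mod_cast h4
    simp only [Set.mem_Icc]
    exact abs_le.1 h5
  exact Set.Finite.subset ((hG.prod hKfin).image _) hsub

/-! #### The axis lemma -/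

lemma axis {M : Matrix (Fin 2) (Fin 2) ℤ} {μ : ℝ} {w : V}
    (hM : actR M w = μ • w) (hw : w ≠ 0) (hμ0 : 0 < μ) (hμ1 : μ < 1)
    {Z : Set V} (hZfin : IsTorusFinite Z) (hinv : ∀ z ∈ Z, actR M z ∈ Z)
    {a : ℝ} (ha : a ≠ 0) : a • w ∉ Z := by
  intro hmem
  obtain ⟨G, hG, rfl⟩ := hZfin
  have key : ∀ n : ℕ, (μ ^ n * a) • w ∈ G + lattice := by
    intro n
    induction n with
    | zero => simpa using hmem
    | succ n ih =>
      have h1 := hinv _ ih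
      rw [actR_smul, hM, smul_smul] at h1
      have : μ ^ n * a * μ = μ ^ (n+1) * a := by ring
      rwa [this] at h1
  have inj : Function.Injective (fun n : ℕ => (μ ^ n * a) • w) := by
    intro m n h
    simp only at h
    have h2 : (μ ^ m * a - μ ^ n * a) • w = 0 := by rw [sub_smul, h, sub_self]
    rcases smul_eq_zero.1 h2 with h3 | h3
    · have h4 : μ ^ m = μ ^ n := by
        have h5 : μ ^ m * a = μ ^ n * a := by linarith [sub_eq_zero.1 h3]
        exact mul_right_cancel₀ ha h5
      by_contra hne
      rcases Nat.lt_or_ge m n with hlt | hge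
      · exact absurd h4 (ne_of_gt (pow_lt_pow_right_of_lt_one₀ hμ0 hμ1 hlt))
      · rcases lt_of_le_of_ne hge (Ne.symm hne) with hlt
        exact absurd h4.symm (ne_of_gt (pow_lt_pow_right_of_lt_one₀ hμ0 hμ1 hlt))
    · exact absurd h3 hw
  have hsub : Set.range (fun n : ℕ => (μ ^ n * a) • w) ⊆
      (G + lattice) ∩ Metric.closedBall 0 (|a| * ‖w‖) := by
    rintro v ⟨n, rfl⟩
    refine ⟨key n, ?_⟩
    rw [Metric.mem_closedBall, dist_zero_right, norm_smul, Real.norm_eq_abs, abs_mul,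
      abs_pow, abs_of_pos hμ0]
    have h1 : μ ^ n ≤ 1 := pow_le_one₀ hμ0.le hμ1.le
    have h2 : μ ^ n * |a| ≤ 1 * |a| :=
      mul_le_mul_of_nonneg_right h1 (abs_nonneg a)
    nlinarith [norm_nonneg w, abs_nonneg a]
  exact (Set.infinite_range_of_injective inj) ((finite_inter hG _).subset hsub)

/-! #### Points and rectangles in coordinates -/

/-- The point `p - t vs + b vu`. -/
def P (p : V) (t b : ℝ) : V := p - t • S.vs + b • S.vu

lemma P_eq (p : V) (t b : ℝ) : S.P p t b = p + (-t) • S.vs + b • S.vu := by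
  unfold P; rw [neg_smul, sub_eq_add_neg]

lemma mem_carrier_iff {R : Rect} {q : V} :
    q ∈ R.carrier S.vs S.vu ↔ 0 ≤ S.cs (q - R.p) ∧ S.cs (q - R.p) ≤ R.s ∧
      0 ≤ S.cu (q - R.p) ∧ S.cu (q - R.p) ≤ R.u := by
  constructor
  · rintro ⟨a, b, h0, h1, h2, h3, rfl⟩
    obtain ⟨ha, hb⟩ := S.point_comb.1 (rfl :
      R.p + a • S.vs + b • S.vu = R.p + a • S.vs + b • S.vu)
    rw [ha, hb]
    exact ⟨h0, h1, h2, h3⟩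
  · rintro ⟨h0, h1, h2, h3⟩
    exact ⟨S.cs (q - R.p), S.cu (q - R.p), h0, h1, h2, h3,
      S.point_comb.2 ⟨rfl, rfl⟩⟩

lemma mem_interior_iff {R : Rect} {q : V} :
    q ∈ R.interior S.vs S.vu ↔ 0 < S.cs (q - R.p) ∧ S.cs (q - R.p) < R.s ∧
      0 < S.cu (q - R.p) ∧ S.cu (q - R.p) < R.u := by
  constructor
  · rintro ⟨a, b, h0, h1, h2, h3, rfl⟩
    obtain ⟨ha, hb⟩ := S.point_comb.1 (rfl :
      R.p + a • S.vs + b • S.vu = R.p + a • S.vs + b • S.vu)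
    rw [ha, hb]
    exact ⟨h0, h1, h2, h3⟩
  · rintro ⟨h0, h1, h2, h3⟩
    exact ⟨S.cs (q - R.p), S.cu (q - R.p), h0, h1, h2, h3,
      S.point_comb.2 ⟨rfl, rfl⟩⟩

lemma eq_left_pt {p q : V} {b : ℝ} : q = p + b • S.vu ↔ q = p + (0:ℝ) • S.vs + b • S.vu := by
  rw [zero_smul, add_zero]

lemma mem_leftSide_iff {R : Rect} {q : V} :
    q ∈ R.leftSide S.vu ↔ S.cs (q - R.p) = 0 ∧
      0 ≤ S.cu (q - R.p) ∧ S.cu (q - R.p) ≤ R.u := by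
  constructor
  · rintro ⟨b, h0, h1, rfl⟩
    obtain ⟨ha, hb⟩ := S.point_comb.1 (S.eq_left_pt.1 (rfl :
      R.p + b • S.vu = R.p + b • S.vu))
    rw [ha, hb]
    exact ⟨rfl, h0, h1⟩
  · rintro ⟨h0, h1, h2⟩
    refine ⟨S.cu (q - R.p), h1, h2, S.eq_left_pt.2 (S.point_comb.2 ⟨h0, rfl⟩)⟩

/-! #### Invariance helpers -/

lemma mem_A {X : Set V} (hinv : IsInvariant S.A X) {x : V} (hx : x ∈ X) :
    actR S.A x ∈ X := by
  rw [← hinv]; exact Set.mem_image_of_mem _ hx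

lemma invB {X : Set V} (hinv : IsInvariant S.A X) : IsInvariant S.B X := by
  unfold IsInvariant
  conv_lhs => rw [← hinv]
  rw [Set.image_image]
  have h : (fun x => actR S.B (actR S.A x)) = id := funext S.actR_B_A
  rw [h, Set.image_id]

lemma mem_B {X : Set V} (hinv : IsInvariant S.A X) {x : V} (hx : x ∈ X) :
    actR S.B x ∈ X := by
  rw [← S.invB hinv]; exact Set.mem_image_of_mem _ hx

lemma mem_iff_B {X : Set V} (hinv : IsInvariant S.A X) (q : V) :
    q ∈ X ↔ actR S.B q ∈ X := by
  constructor
  · exact fun h => S.mem_B hinv h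
  · intro h
    have := S.mem_A hinv h
    rwa [S.actR_A_B] at this

lemma mem_iff_A {X : Set V} (hinv : IsInvariant S.A X) (q : V) :
    q ∈ X ↔ actR S.A q ∈ X := by
  constructor
  · exact fun h => S.mem_A hinv h
  · intro h
    have := S.mem_B hinv h
    rwa [S.actR_B_A] at this

lemma sat {X : Set V} (hfin : IsTorusFinite X) {x m : V} (hx : x ∈ X) (hm : m ∈ lattice) :
    x + m ∈ X := by
  obtain ⟨F, hF, rfl⟩ := hfin
  rw [Set.mem_add] at hx ⊢
  obtain ⟨f, hf, l, hl, rfl⟩ := hx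
  exact ⟨f, hf, l + m, lattice_add hl hm, by abel⟩

lemma tf_sub {X Y : Set V} (hX : IsTorusFinite X) (hY : IsTorusFinite Y) :
    IsTorusFinite (Y - X) := by
  obtain ⟨F, hF, rfl⟩ := hX
  obtain ⟨G, hG, rfl⟩ := hY
  refine ⟨G - F, hG.sub hF, ?_⟩
  ext v
  simp only [Set.mem_sub, Set.mem_add]
  constructor
  · rintro ⟨y, ⟨g, hg, l, hl, rfl⟩, x, ⟨f, hf, l', hl', rfl⟩, rfl⟩
    exact ⟨g - f, ⟨g, hg, f, hf, rfl⟩, l - l', lattice_sub hl hl', by abel⟩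
  · rintro ⟨d, ⟨g, hg, f, hf, rfl⟩, l, hl, rfl⟩
    exact ⟨g + l, ⟨g, hg, l, hl, rfl⟩, f + 0, ⟨f, hf, 0, lattice_zero, rfl⟩, by abel⟩

lemma sub_invA {X Y : Set V} (hX : IsInvariant S.A X) (hY : IsInvariant S.A Y) :
    ∀ z ∈ Y - X, actR S.A z ∈ Y - X := by
  rintro z ⟨y, hy, x, hx, rfl⟩
  rw [actR_sub]
  exact ⟨_, S.mem_A hY hy, _, S.mem_A hX hx, rfl⟩

lemma sub_invB {X Y : Set V} (hX : IsInvariant S.A X) (hY : IsInvariant S.A Y) :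
    ∀ z ∈ Y - X, actR S.B z ∈ Y - X := by
  rintro z ⟨y, hy, x, hx, rfl⟩
  rw [actR_sub]
  exact ⟨_, S.mem_B hY hy, _, S.mem_B hX hx, rfl⟩

/-! #### Transport of rectangles -/

/-- Image rectangle under `f_A`. -/
noncomputable def mapA (R : Rect) : Rect :=
  ⟨actR S.A R.p, S.lam⁻¹ * R.s, S.lam * R.u,
    mul_pos S.lam_inv_pos R.s_pos, mul_pos S.lam_pos R.u_pos⟩

/-- Image rectangle under `f_A⁻¹`. -/
noncomputable def mapB (R : Rect) : Rect :=
  ⟨actR S.B R.p, S.lam * R.s, S.lam⁻¹ * R.u,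
    mul_pos S.lam_pos R.s_pos, mul_pos S.lam_inv_pos R.u_pos⟩

lemma actA_pt (p : V) (a b : ℝ) :
    actR S.A (p + a • S.vs + b • S.vu)
      = actR S.A p + (S.lam⁻¹ * a) • S.vs + (S.lam * b) • S.vu := by
  rw [actR_add, actR_add, actR_smul, actR_smul, S.hAs, S.hAu, smul_smul, smul_smul,
    mul_comm a, mul_comm b]

lemma actB_pt (p : V) (a b : ℝ) :
    actR S.B (p + a • S.vs + b • S.vu)
      = actR S.B p + (S.lam * a) • S.vs + (S.lam⁻¹ * b) • S.vu := by
  rw [actR_add, actR_add, actR_smul, actR_smul, S.hBs, S.hBu, smul_smul, smul_smul,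
    mul_comm a, mul_comm b]

lemma cs_B_shift (q w : V) : S.cs (actR S.B q - actR S.B w) = S.lam * S.cs (q - w) := by
  rw [← actR_sub, S.cs_actB]

lemma cu_B_shift (q w : V) : S.cu (actR S.B q - actR S.B w) = S.lam⁻¹ * S.cu (q - w) := by
  rw [← actR_sub, S.cu_actB]

lemma mapA_mem_carrier {R : Rect} {q : V} :
    q ∈ (S.mapA R).carrier S.vs S.vu ↔ actR S.B q ∈ R.carrier S.vs S.vu := by
  rw [S.mem_carrier_iff, S.mem_carrier_iff]
  have h1 : S.cs (actR S.B q - R.p) = S.lam * S.cs (q - (S.mapA R).p) := by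
    have : R.p = actR S.B ((S.mapA R).p) := by
      show R.p = actR S.B (actR S.A R.p); rw [S.actR_B_A]
    rw [this, cs_B_shift]
  have h2 : S.cu (actR S.B q - R.p) = S.lam⁻¹ * S.cu (q - (S.mapA R).p) := by
    have : R.p = actR S.B ((S.mapA R).p) := by
      show R.p = actR S.B (actR S.A R.p); rw [S.actR_B_A]
    rw [this, cu_B_shift]
  rw [h1, h2]
  have hl := S.lam_pos
  have hli := S.lam_inv_pos
  show _ ↔ _ ∧ _ ≤ R.s ∧ _ ∧ _ ≤ R.u
  have e1 : (S.mapA R).s = S.lam⁻¹ * R.s := rfl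
  have e2 : (S.mapA R).u = S.lam * R.u := rfl
  rw [e1, e2]
  constructor
  · rintro ⟨a0, a1, b0, b1⟩
    refine ⟨by positivity, ?_, by positivity, ?_⟩
    · calc S.lam * S.cs (q - (S.mapA R).p) ≤ S.lam * (S.lam⁻¹ * R.s) := by
            exact mul_le_mul_of_nonneg_left a1 hl.le
        _ = R.s := by field_simp
    · calc S.lam⁻¹ * S.cu (q - (S.mapA R).p) ≤ S.lam⁻¹ * (S.lam * R.u) := by
            exact mul_le_mul_of_nonneg_left b1 hli.le
        _ = R.u := by field_simp
  · rintro ⟨a0, a1, b0, b1⟩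
    refine ⟨nonneg_of_mul_nonneg_right ?_ hl, ?_, nonneg_of_mul_nonneg_right ?_ hli, ?_⟩
    · exact a0
    · have := mul_le_mul_of_nonneg_left a1 hli.le
      calc S.cs (q - (S.mapA R).p) = S.lam⁻¹ * (S.lam * S.cs (q - (S.mapA R).p)) := by
            field_simp
        _ ≤ S.lam⁻¹ * R.s := this
    · exact b0
    · have := mul_le_mul_of_nonneg_left b1 hl.le
      calc S.cu (q - (S.mapA R).p) = S.lam * (S.lam⁻¹ * S.cu (q - (S.mapA R).p)) := by
            field_simp
        _ ≤ S.lam * R.u := this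

/-! #### Iterates -/

lemma iterA_mem {X : Set V} (hinv : IsInvariant S.A X) (n : ℕ) {x : V} (hx : x ∈ X) :
    (actR S.A)^[n] x ∈ X := by
  induction n with
  | zero => simpa
  | succ n ih => rw [Function.iterate_succ_apply']; exact S.mem_A hinv ih

lemma iterB_mem {X : Set V} (hinv : IsInvariant S.A X) (n : ℕ) {x : V} (hx : x ∈ X) :
    (actR S.B)^[n] x ∈ X := by
  induction n with
  | zero => simpa
  | succ n ih => rw [Function.iterate_succ_apply']; exact S.mem_B hinv ih

lemma iter_AB (n : ℕ) (v : V) : (actR S.A)^[n] ((actR S.B)^[n] v) = v := by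
  induction n with
  | zero => simp
  | succ n ih =>
    rw [Function.iterate_succ_apply' (actR S.B), Function.iterate_succ_apply (actR S.A),
      S.actR_A_B]
    exact ih

lemma iterA_inj (n : ℕ) : Function.Injective ((actR S.A)^[n]) :=
  Function.Injective.iterate S.actA_inj n

lemma actA_P (p : V) (t b : ℝ) :
    actR S.A (S.P p t b) = S.P (actR S.A p) (S.lam⁻¹ * t) (S.lam * b) := by
  rw [P_eq, actA_pt, P_eq]
  have h : S.lam⁻¹ * -t = -(S.lam⁻¹ * t) := by ring
  rw [h]

lemma iterA_P (n : ℕ) (p : V) (t b : ℝ) :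
    (actR S.A)^[n] (S.P p t b)
      = S.P ((actR S.A)^[n] p) ((S.lam⁻¹) ^ n * t) (S.lam ^ n * b) := by
  induction n with
  | zero => simp
  | succ n ih =>
    rw [Function.iterate_succ_apply' (actR S.A), ih, actA_P,
      Function.iterate_succ_apply' (actR S.A)]
    congr 1 <;> ring

/-! #### The strip lemma: finding points of `Y` to the left -/

lemma strip {Y : Set V} (hYfin : IsTorusFinite Y) (hYinv : IsInvariant S.A Y)
    (hYne : Y.Nonempty) {u : ℝ} (hu : 0 < u) :
    ∃ L : ℝ, 1 ≤ L ∧ ∀ p : V, ∃ t b : ℝ, 0 < t ∧ t ≤ L ∧ 0 ≤ b ∧ b ≤ u ∧ S.P p t b ∈ Y := by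
  obtain ⟨y₀, hy₀⟩ := hYne
  obtain ⟨N, hN⟩ := pow_unbounded_of_one_lt (2 * S.kap / u) S.hlam
  have hkap := S.one_le_kap
  have hlamN : (1:ℝ) ≤ S.lam ^ N := one_le_pow₀ S.hlam.le
  have hlamNpos : (0:ℝ) < S.lam ^ N := lt_of_lt_of_le one_pos hlamN
  have hkN : S.kap < S.lam ^ N * u / 2 := by
    rw [div_lt_iff₀ hu] at hN
    nlinarith
  refine ⟨(2 * S.kap + 1) * S.lam ^ N, by nlinarith, ?_⟩
  intro p
  set q := (actR S.A)^[N] p with hq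
  set c : ℝ := S.lam ^ N * u / 2 with hc
  set v := q + (-(S.kap + 1)) • S.vs + c • S.vu with hv
  obtain ⟨m, hm, hnear⟩ := lattice_near (v - y₀)
  set y := y₀ + m with hy
  have hyY : y ∈ Y := sat hYfin hy₀ hm
  have hvy : ‖y - v‖ ≤ 1/2 := by
    have h1 : y - v = -(v - y₀ - m) := by rw [hy]; abel
    rw [h1, norm_neg]
    exact hnear
  have hcsyv : |S.cs (y - v)| ≤ S.kap / 2 := by
    calc |S.cs (y - v)| ≤ S.kap * ‖y - v‖ := S.abs_cs_le _
      _ ≤ S.kap * (1/2) := mul_le_mul_of_nonneg_left hvy S.kap_pos.le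
      _ = S.kap / 2 := by ring
  have hcuyv : |S.cu (y - v)| ≤ S.kap / 2 := by
    calc |S.cu (y - v)| ≤ S.kap * ‖y - v‖ := S.abs_cu_le _
      _ ≤ S.kap * (1/2) := mul_le_mul_of_nonneg_left hvy S.kap_pos.le
      _ = S.kap / 2 := by ring
  have hvq : S.cs (v - q) = -(S.kap + 1) ∧ S.cu (v - q) = c := by
    have : v = q + (-(S.kap + 1)) • S.vs + c • S.vu := hv
    exact S.point_comb.1 this
  have hwdec : y - q = (v - q) + (y - v) := by abel
  have hcsw : S.cs (y - q) = -(S.kap + 1) + S.cs (y - v) := by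
    rw [hwdec, cs_add, hvq.1]
  have hcuw : S.cu (y - q) = c + S.cu (y - v) := by
    rw [hwdec, cu_add, hvq.2]
  set th : ℝ := -(S.cs (y - q)) with hth
  set bh : ℝ := S.cu (y - q) with hbh
  have hth1 : 1 ≤ th := by
    rw [hth, hcsw]
    have := abs_le.1 hcsyv
    nlinarith
  have hth2 : th ≤ 2 * S.kap + 1 := by
    rw [hth, hcsw]
    have := abs_le.1 hcsyv
    nlinarith
  have hbh0 : 0 ≤ bh := by
    rw [hcuw]
    have := abs_le.1 hcuyv
    nlinarith
  have hbh1 : bh ≤ S.lam ^ N * u := by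
    rw [hcuw, hc]
    have := abs_le.1 hcuyv
    nlinarith
  have hyP : y = S.P q th bh := by
    rw [P_eq]
    apply S.point_comb.2
    refine ⟨?_, hbh.symm⟩
    rw [hth]; ring
  -- pull back
  set y' := (actR S.B)^[N] y with hy'
  have hy'Y : y' ∈ Y := S.iterB_mem hYinv N hyY
  refine ⟨S.lam ^ N * th, (S.lam⁻¹) ^ N * bh,
    mul_pos hlamNpos (lt_of_lt_of_le one_pos hth1), ?_,
    mul_nonneg (pow_nonneg S.lam_inv_pos.le N) hbh0, ?_, ?_⟩
  · calc S.lam ^ N * th ≤ S.lam ^ N * (2 * S.kap + 1) :=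
        mul_le_mul_of_nonneg_left hth2 hlamNpos.le
      _ = (2 * S.kap + 1) * S.lam ^ N := by ring
  · have hinv : (S.lam⁻¹) ^ N * S.lam ^ N = 1 := by
      rw [← mul_pow, inv_mul_cancel₀ S.lam_ne, one_pow]
    have h1 : (S.lam⁻¹) ^ N * bh ≤ (S.lam⁻¹) ^ N * (S.lam ^ N * u) := by
      exact mul_le_mul_of_nonneg_left hbh1 (pow_nonneg S.lam_inv_pos.le N)
    have h2 : (S.lam⁻¹) ^ N * (S.lam ^ N * u) = u := by
      rw [← mul_assoc, hinv, one_mul]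
    linarith
  · have key : (actR S.A)^[N] (S.P p (S.lam ^ N * th) ((S.lam⁻¹) ^ N * bh)) = y := by
      rw [iterA_P, hyP]
      have e1 : (S.lam⁻¹) ^ N * (S.lam ^ N * th) = th := by
        rw [← mul_assoc, ← mul_pow, inv_mul_cancel₀ S.lam_ne, one_pow, one_mul]
      have e2 : S.lam ^ N * ((S.lam⁻¹) ^ N * bh) = bh := by
        rw [← mul_assoc, ← mul_pow, mul_inv_cancel₀ S.lam_ne, one_pow, one_mul]
      rw [e1, e2]
    have key2 : (actR S.A)^[N] y' = y := S.iter_AB N y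
    have := S.iterA_inj N (key.trans key2.symm)
    rw [← this] at hy'Y
    exact hy'Y

/-! #### The first-hit function -/

lemma exists_min_hit {Y : Set V} (hYfin : IsTorusFinite Y) (hYinv : IsInvariant S.A Y)
    (hYne : Y.Nonempty) (p : V) (u : ℝ) (hu : 0 < u) :
    ∃ t₀ : ℝ, (0 < t₀ ∧ ∃ b, 0 ≤ b ∧ b ≤ u ∧ S.P p t₀ b ∈ Y) ∧
      ∀ t, (0 < t ∧ ∃ b, 0 ≤ b ∧ b ≤ u ∧ S.P p t b ∈ Y) → t₀ ≤ t := by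
  set H : Set ℝ := {t | 0 < t ∧ ∃ b, 0 ≤ b ∧ b ≤ u ∧ S.P p t b ∈ Y} with hH
  obtain ⟨L, hL1, hL⟩ := S.strip hYfin hYinv hYne hu
  obtain ⟨tL, bL, htL0, htL1, hbL0, hbL1, hmemL⟩ := hL p
  have htLH : tL ∈ H := ⟨htL0, bL, hbL0, hbL1, hmemL⟩
  set r : ℝ := L * ‖S.vs‖ + u * ‖S.vu‖ + ‖p‖ with hr
  obtain ⟨F, hF, hYF⟩ := hYfin
  have hfin : (H ∩ Set.Iic L).Finite := by
    have hsub : (H ∩ Set.Iic L) ⊆ (fun y => S.cs (p - y)) '' (Y ∩ Metric.closedBall 0 r) := by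
      rintro t ⟨⟨ht0, b, hb0, hb1, hmem⟩, htL⟩
      refine ⟨S.P p t b, ⟨hmem, ?_⟩, ?_⟩
      · rw [Metric.mem_closedBall, dist_zero_right]
        have h1 : S.P p t b - p = (-t) • S.vs + b • S.vu := by
          rw [P_eq]; abel
        have h2 : ‖S.P p t b - p‖ ≤ t * ‖S.vs‖ + b * ‖S.vu‖ := by
          rw [h1]
          refine (norm_add_le _ _).trans ?_
          rw [norm_smul, norm_smul, Real.norm_eq_abs, Real.norm_eq_abs,
            abs_neg, abs_of_pos ht0, abs_of_nonneg hb0]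
        have h3 : ‖S.P p t b‖ ≤ ‖S.P p t b - p‖ + ‖p‖ := by
          calc ‖S.P p t b‖ = ‖(S.P p t b - p) + p‖ := by rw [sub_add_cancel]
            _ ≤ ‖S.P p t b - p‖ + ‖p‖ := norm_add_le _ _
        have h4 : t * ‖S.vs‖ ≤ L * ‖S.vs‖ :=
          mul_le_mul_of_nonneg_right htL (norm_nonneg _)
        have h5 : b * ‖S.vu‖ ≤ u * ‖S.vu‖ :=
          mul_le_mul_of_nonneg_right hb1 (norm_nonneg _)
        rw [hr]; linarith
      · show S.cs (p - S.P p t b) = t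
        have hd : p - S.P p t b = t • S.vs + (-b) • S.vu := by
          rw [P_eq, neg_smul, neg_smul]; abel
        rw [hd, cs_add, cs_smul, cs_smul, cs_vs, cs_vu]; ring
    refine Set.Finite.subset ?_ hsub
    apply Set.Finite.image
    rw [hYF]
    exact finite_inter hF r
  obtain ⟨t₀, ht₀mem, ht₀min⟩ := Set.exists_min_image _ id hfin ⟨tL, htLH, htL1⟩
  refine ⟨t₀, ht₀mem.1, ?_⟩
  intro t htH
  by_cases hcase : t ≤ L
  · exact ht₀min t ⟨htH, hcase⟩
  · have h1 : t₀ ≤ tL := ht₀min tL ⟨htLH, htL1⟩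
    push_neg at hcase
    linarith

/-! #### More transport -/

lemma cs_A_shift (q w : V) : S.cs (actR S.A q - actR S.A w) = S.lam⁻¹ * S.cs (q - w) := by
  rw [← actR_sub, S.cs_actA]

lemma cu_A_shift (q w : V) : S.cu (actR S.A q - actR S.A w) = S.lam * S.cu (q - w) := by
  rw [← actR_sub, S.cu_actA]

lemma mapB_mem_carrier {R : Rect} {q : V} :
    q ∈ (S.mapB R).carrier S.vs S.vu ↔ actR S.A q ∈ R.carrier S.vs S.vu := by
  rw [S.mem_carrier_iff, S.mem_carrier_iff]
  have hp : R.p = actR S.A ((S.mapB R).p) := by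
    show R.p = actR S.A (actR S.B R.p); rw [S.actR_A_B]
  have h1 : S.cs (actR S.A q - R.p) = S.lam⁻¹ * S.cs (q - (S.mapB R).p) := by
    rw [hp, cs_A_shift]
  have h2 : S.cu (actR S.A q - R.p) = S.lam * S.cu (q - (S.mapB R).p) := by
    rw [hp, cu_A_shift]
  rw [h1, h2]
  have hl := S.lam_pos
  have hli := S.lam_inv_pos
  have e1 : (S.mapB R).s = S.lam * R.s := rfl
  have e2 : (S.mapB R).u = S.lam⁻¹ * R.u := rfl
  rw [e1, e2]
  constructor
  · rintro ⟨a0, a1, b0, b1⟩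
    refine ⟨by positivity, ?_, by positivity, ?_⟩
    · calc S.lam⁻¹ * S.cs (q - (S.mapB R).p) ≤ S.lam⁻¹ * (S.lam * R.s) :=
          mul_le_mul_of_nonneg_left a1 hli.le
        _ = R.s := by field_simp
    · calc S.lam * S.cu (q - (S.mapB R).p) ≤ S.lam * (S.lam⁻¹ * R.u) :=
          mul_le_mul_of_nonneg_left b1 hl.le
        _ = R.u := by field_simp
  · rintro ⟨a0, a1, b0, b1⟩
    refine ⟨nonneg_of_mul_nonneg_right a0 hli, ?_, nonneg_of_mul_nonneg_right b0 hl, ?_⟩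
    · have h3 := mul_le_mul_of_nonneg_left a1 hl.le
      calc S.cs (q - (S.mapB R).p) = S.lam * (S.lam⁻¹ * S.cs (q - (S.mapB R).p)) := by
            field_simp
        _ ≤ S.lam * R.s := h3
    · have h3 := mul_le_mul_of_nonneg_left b1 hli.le
      calc S.cu (q - (S.mapB R).p) = S.lam⁻¹ * (S.lam * S.cu (q - (S.mapB R).p)) := by
            field_simp
        _ ≤ S.lam⁻¹ * R.u := h3

lemma mapA_incEnd (R : Rect) :
    (S.mapA R).incEnd S.vs S.vu = actR S.A (R.incEnd S.vs S.vu) := by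
  show actR S.A R.p + (S.lam⁻¹ * R.s) • S.vs + (S.lam * R.u) • S.vu
    = actR S.A (R.p + R.s • S.vs + R.u • S.vu)
  rw [actA_pt]

lemma mapB_incEnd (R : Rect) :
    (S.mapB R).incEnd S.vs S.vu = actR S.B (R.incEnd S.vs S.vu) := by
  show actR S.B R.p + (S.lam * R.s) • S.vs + (S.lam⁻¹ * R.u) • S.vu
    = actR S.B (R.p + R.s • S.vs + R.u • S.vu)
  rw [actB_pt]

lemma eqB_iff (q w : V) : actR S.B q = w ↔ q = actR S.A w := by
  constructor
  · rintro rfl; rw [S.actR_A_B]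
  · rintro rfl; rw [S.actR_B_A]

lemma eqA_iff (q w : V) : actR S.A q = w ↔ q = actR S.B w := by
  constructor
  · rintro rfl; rw [S.actR_B_A]
  · rintro rfl; rw [S.actR_A_B]

lemma mapA_prim {X : Set V} (hinv : IsInvariant S.A X) {R : Rect}
    (h : R.IsPrimPos S.vs S.vu X) : (S.mapA R).IsPrimPos S.vs S.vu X := by
  obtain ⟨⟨hp, he⟩, hcar⟩ := h
  refine ⟨⟨S.mem_A hinv hp, ?_⟩, ?_⟩
  · rw [S.mapA_incEnd]; exact S.mem_A hinv he
  · ext q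
    constructor
    · rintro ⟨hqc, hqX⟩
      have h1 : actR S.B q ∈ R.carrier S.vs S.vu := S.mapA_mem_carrier.1 hqc
      have h2 : actR S.B q ∈ X := S.mem_B hinv hqX
      have h3 : actR S.B q ∈ ({R.p, R.incEnd S.vs S.vu} : Set V) := by
        rw [← hcar]; exact ⟨h1, h2⟩
      rcases h3 with h3 | h3
      · left
        show q = (S.mapA R).p
        exact (S.eqB_iff q R.p).1 h3
      · right
        show q = (S.mapA R).incEnd S.vs S.vu
        rw [S.mapA_incEnd]
        exact (S.eqB_iff q _).1 h3
    · rintro (rfl | rfl)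
      · constructor
        · apply S.mapA_mem_carrier.2
          rw [show actR S.B ((S.mapA R).p) = R.p from (S.eqB_iff _ _).2 rfl]
          exact ⟨0, 0, le_refl 0, R.s_pos.le, le_refl 0, R.u_pos.le, by simp⟩
        · exact S.mem_A hinv hp
      · constructor
        · apply S.mapA_mem_carrier.2
          rw [show actR S.B ((S.mapA R).incEnd S.vs S.vu) = R.incEnd S.vs S.vu by
            rw [S.mapA_incEnd, S.actR_B_A]]
          exact ⟨R.s, R.u, R.s_pos.le, le_refl _, R.u_pos.le, le_refl _, rfl⟩
        · rw [S.mapA_incEnd]; exact S.mem_A hinv he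

lemma mapB_prim {X : Set V} (hinv : IsInvariant S.A X) {R : Rect}
    (h : R.IsPrimPos S.vs S.vu X) : (S.mapB R).IsPrimPos S.vs S.vu X := by
  obtain ⟨⟨hp, he⟩, hcar⟩ := h
  refine ⟨⟨S.mem_B hinv hp, ?_⟩, ?_⟩
  · rw [S.mapB_incEnd]; exact S.mem_B hinv he
  · ext q
    constructor
    · rintro ⟨hqc, hqX⟩
      have h1 : actR S.A q ∈ R.carrier S.vs S.vu := S.mapB_mem_carrier.1 hqc
      have h2 : actR S.A q ∈ X := S.mem_A hinv hqX
      have h3 : actR S.A q ∈ ({R.p, R.incEnd S.vs S.vu} : Set V) := by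
        rw [← hcar]; exact ⟨h1, h2⟩
      rcases h3 with h3 | h3
      · left
        show q = (S.mapB R).p
        exact (S.eqA_iff q R.p).1 h3
      · right
        show q = (S.mapB R).incEnd S.vs S.vu
        rw [S.mapB_incEnd]
        exact (S.eqA_iff q _).1 h3
    · rintro (rfl | rfl)
      · constructor
        · apply S.mapB_mem_carrier.2
          rw [show actR S.A ((S.mapB R).p) = R.p from (S.eqA_iff _ _).2 rfl]
          exact ⟨0, 0, le_refl 0, R.s_pos.le, le_refl 0, R.u_pos.le, by simp⟩
        · exact S.mem_B hinv hp
      · constructor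
        · apply S.mapB_mem_carrier.2
          rw [show actR S.A ((S.mapB R).incEnd S.vs S.vu) = R.incEnd S.vs S.vu by
            rw [S.mapB_incEnd, S.actR_A_B]]
          exact ⟨R.s, R.u, R.s_pos.le, le_refl _, R.u_pos.le, le_refl _, rfl⟩
        · rw [S.mapB_incEnd]; exact S.mem_B hinv he

lemma mapA_disj {Y : Set V} (hinv : IsInvariant S.A Y) {R : Rect}
    (h : Disjoint (R.carrier S.vs S.vu) Y) :
    Disjoint ((S.mapA R).carrier S.vs S.vu) Y := by
  rw [Set.disjoint_left] at h ⊢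
  intro q hqc hqY
  exact h (S.mapA_mem_carrier.1 hqc) (S.mem_B hinv hqY)

lemma mapB_disj {Y : Set V} (hinv : IsInvariant S.A Y) {R : Rect}
    (h : Disjoint (R.carrier S.vs S.vu) Y) :
    Disjoint ((S.mapB R).carrier S.vs S.vu) Y := by
  rw [Set.disjoint_left] at h ⊢
  intro q hqc hqY
  exact h (S.mapB_mem_carrier.1 hqc) (S.mem_A hinv hqY)

/-! #### The minimal-hit predicate -/

/-- `t₀` is the first time the left-moving segment of height `u` at `p` meets `Y`. -/
def MinHit (Y : Set V) (p : V) (u t₀ : ℝ) : Prop :=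
  (0 < t₀ ∧ ∃ b, 0 ≤ b ∧ b ≤ u ∧ S.P p t₀ b ∈ Y) ∧
    ∀ t, (0 < t ∧ ∃ b, 0 ≤ b ∧ b ≤ u ∧ S.P p t b ∈ Y) → t₀ ≤ t

lemma minHit_unique {Y : Set V} {p : V} {u t₀ t₁ : ℝ}
    (h0 : S.MinHit Y p u t₀) (h1 : S.MinHit Y p u t₁) : t₀ = t₁ :=
  le_antisymm (h0.2 t₁ h1.1) (h1.2 t₀ h0.1)

lemma exists_minHit {Y : Set V} (hYfin : IsTorusFinite Y) (hYinv : IsInvariant S.A Y)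
    (hYne : Y.Nonempty) (p : V) (u : ℝ) (hu : 0 < u) : ∃ t₀, S.MinHit Y p u t₀ :=
  S.exists_min_hit hYfin hYinv hYne p u hu

lemma actB_P (p : V) (t b : ℝ) :
    actR S.B (S.P p t b) = S.P (actR S.B p) (S.lam * t) (S.lam⁻¹ * b) := by
  rw [P_eq, actB_pt, P_eq]
  have h : S.lam * -t = -(S.lam * t) := by ring
  rw [h]

lemma minHit_mapA {Y : Set V} (hYinv : IsInvariant S.A Y) {p : V} {u t₀ : ℝ}
    (h : S.MinHit Y p u t₀) :
    S.MinHit Y (actR S.A p) (S.lam * u) (S.lam⁻¹ * t₀) := by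
  obtain ⟨⟨ht₀, b, hb0, hb1, hmem⟩, hmin⟩ := h
  constructor
  · refine ⟨mul_pos S.lam_inv_pos ht₀, S.lam * b, mul_nonneg S.lam_pos.le hb0,
      mul_le_mul_of_nonneg_left hb1 S.lam_pos.le, ?_⟩
    rw [← S.actA_P]
    exact S.mem_A hYinv hmem
  · rintro t ⟨ht, b', hb'0, hb'1, hmem'⟩
    have h1 : S.P p (S.lam * t) (S.lam⁻¹ * b') ∈ Y := by
      have h2 := S.mem_B hYinv hmem'
      rw [S.actB_P] at h2
      rwa [S.actR_B_A] at h2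
    have h3 : S.lam⁻¹ * b' ≤ u := by
      have h5 := mul_le_mul_of_nonneg_left hb'1 S.lam_inv_pos.le
      have h6 : S.lam⁻¹ * (S.lam * u) = u := by
        rw [← mul_assoc, inv_mul_cancel₀ S.lam_ne, one_mul]
      linarith
    have h4 : t₀ ≤ S.lam * t := hmin _ ⟨mul_pos S.lam_pos ht, S.lam⁻¹ * b',
      mul_nonneg S.lam_inv_pos.le hb'0, h3, h1⟩
    have h7 := mul_le_mul_of_nonneg_left h4 S.lam_inv_pos.le
    have h8 : S.lam⁻¹ * (S.lam * t) = t := by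
      rw [← mul_assoc, inv_mul_cancel₀ S.lam_ne, one_mul]
    linarith

lemma minHit_mapB {Y : Set V} (hYinv : IsInvariant S.A Y) {p : V} {u t₀ : ℝ}
    (h : S.MinHit Y p u t₀) :
    S.MinHit Y (actR S.B p) (S.lam⁻¹ * u) (S.lam * t₀) := by
  obtain ⟨⟨ht₀, b, hb0, hb1, hmem⟩, hmin⟩ := h
  constructor
  · refine ⟨mul_pos S.lam_pos ht₀, S.lam⁻¹ * b, mul_nonneg S.lam_inv_pos.le hb0,
      mul_le_mul_of_nonneg_left hb1 S.lam_inv_pos.le, ?_⟩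
    rw [← S.actB_P]
    exact S.mem_B hYinv hmem
  · rintro t ⟨ht, b', hb'0, hb'1, hmem'⟩
    have h1 : S.P p (S.lam⁻¹ * t) (S.lam * b') ∈ Y := by
      have h2 := S.mem_A hYinv hmem'
      rw [S.actA_P] at h2
      rwa [S.actR_A_B] at h2
    have h3 : S.lam * b' ≤ u := by
      have h5 := mul_le_mul_of_nonneg_left hb'1 S.lam_pos.le
      have h6 : S.lam * (S.lam⁻¹ * u) = u := by
        rw [← mul_assoc, mul_inv_cancel₀ S.lam_ne, one_mul]
      linarith
    have h4 : t₀ ≤ S.lam⁻¹ * t := hmin _ ⟨mul_pos S.lam_inv_pos ht, S.lam * b',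
      mul_nonneg S.lam_pos.le hb'0, h3, h1⟩
    have h7 := mul_le_mul_of_nonneg_left h4 S.lam_pos.le
    have h8 : S.lam * (S.lam⁻¹ * t) = t := by
      rw [← mul_assoc, mul_inv_cancel₀ S.lam_ne, one_mul]
    linarith

/-! #### Iterated transport and normalization -/

lemma iterA_state {X Y : Set V} (hXinv : IsInvariant S.A X) (hYinv : IsInvariant S.A Y)
    (n : ℕ) (R : Rect) (hprim : R.IsPrimPos S.vs S.vu X)
    (hdisj : Disjoint (R.carrier S.vs S.vu) Y) {t₀ : ℝ} (hmin : S.MinHit Y R.p R.u t₀) :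
    ((S.mapA)^[n] R).IsPrimPos S.vs S.vu X ∧
      Disjoint (((S.mapA)^[n] R).carrier S.vs S.vu) Y ∧
      S.MinHit Y ((S.mapA)^[n] R).p ((S.mapA)^[n] R).u ((S.lam⁻¹) ^ n * t₀) ∧
      ((S.mapA)^[n] R).s = (S.lam⁻¹) ^ n * R.s ∧
      ((S.mapA)^[n] R).u = S.lam ^ n * R.u := by
  induction n with
  | zero =>
    refine ⟨hprim, hdisj, ?_, by simp, by simp⟩
    simpa using hmin
  | succ n ih =>
    obtain ⟨h1, h2, h3, h4, h5⟩ := ih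
    rw [Function.iterate_succ_apply']
    refine ⟨S.mapA_prim hXinv h1, S.mapA_disj hYinv h2, ?_, ?_, ?_⟩
    · have h6 := S.minHit_mapA hYinv h3
      have e : S.lam⁻¹ * ((S.lam⁻¹) ^ n * t₀) = (S.lam⁻¹) ^ (n+1) * t₀ := by ring
      rw [e] at h6
      exact h6
    · show S.lam⁻¹ * ((S.mapA)^[n] R).s = _
      rw [h4]; ring
    · show S.lam * ((S.mapA)^[n] R).u = _
      rw [h5]; ring

lemma iterB_state {X Y : Set V} (hXinv : IsInvariant S.A X) (hYinv : IsInvariant S.A Y)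
    (n : ℕ) (R : Rect) (hprim : R.IsPrimPos S.vs S.vu X)
    (hdisj : Disjoint (R.carrier S.vs S.vu) Y) {t₀ : ℝ} (hmin : S.MinHit Y R.p R.u t₀) :
    ((S.mapB)^[n] R).IsPrimPos S.vs S.vu X ∧
      Disjoint (((S.mapB)^[n] R).carrier S.vs S.vu) Y ∧
      S.MinHit Y ((S.mapB)^[n] R).p ((S.mapB)^[n] R).u (S.lam ^ n * t₀) ∧
      ((S.mapB)^[n] R).s = S.lam ^ n * R.s ∧
      ((S.mapB)^[n] R).u = (S.lam⁻¹) ^ n * R.u := by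
  induction n with
  | zero =>
    refine ⟨hprim, hdisj, ?_, by simp, by simp⟩
    simpa using hmin
  | succ n ih =>
    obtain ⟨h1, h2, h3, h4, h5⟩ := ih
    rw [Function.iterate_succ_apply']
    refine ⟨S.mapB_prim hXinv h1, S.mapB_disj hYinv h2, ?_, ?_, ?_⟩
    · have h6 := S.minHit_mapB hYinv h3
      have e : S.lam * (S.lam ^ n * t₀) = S.lam ^ (n+1) * t₀ := by ring
      rw [e] at h6
      exact h6
    · show S.lam * ((S.mapB)^[n] R).s = _
      rw [h4]; ring
    · show S.lam⁻¹ * ((S.mapB)^[n] R).u = _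
      rw [h5]; ring

lemma normalize {X Y : Set V} (hXinv : IsInvariant S.A X) (hYinv : IsInvariant S.A Y)
    {r₀ : ℝ} (hr₀ : 0 < r₀) (R : Rect) (hprim : R.IsPrimPos S.vs S.vu X)
    (hdisj : Disjoint (R.carrier S.vs S.vu) Y) {t₀ : ℝ} (hmin : S.MinHit Y R.p R.u t₀) :
    ∃ (R' : Rect) (t₀' : ℝ), R'.IsPrimPos S.vs S.vu X ∧
      Disjoint (R'.carrier S.vs S.vu) Y ∧
      S.MinHit Y R'.p R'.u t₀' ∧ r₀ ≤ R'.s ∧ R'.s < S.lam * r₀ ∧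
      R'.s * R'.u = R.s * R.u ∧ t₀' / R'.s = t₀ / R.s := by
  obtain ⟨n, hn1, hn2⟩ : ∃ n : ℤ, S.lam ^ n ≤ R.s / r₀ ∧ R.s / r₀ < S.lam ^ (n+1) := by
    obtain ⟨n, hn⟩ := exists_mem_Ico_zpow (div_pos R.s_pos hr₀) S.hlam
    exact ⟨n, hn.1, hn.2⟩
  have hp : (0:ℝ) < S.lam ^ n := zpow_pos S.lam_pos n
  have hb1 : r₀ ≤ R.s / S.lam ^ n := by
    have h₁ := (le_div_iff₀ hr₀).1 hn1
    rw [le_div_iff₀ hp]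
    linarith
  have hb2 : R.s / S.lam ^ n < S.lam * r₀ := by
    have h₂ := (div_lt_iff₀ hr₀).1 hn2
    rw [zpow_add_one₀ S.lam_ne] at h₂
    rw [div_lt_iff₀ hp]
    nlinarith
  rcases le_or_gt 0 n with hc | hc
  · set k := n.toNat with hk
    have hkn : (S.lam : ℝ) ^ k = S.lam ^ n := by
      rw [← zpow_natCast, hk, Int.toNat_of_nonneg hc]
    have hsval : (S.lam⁻¹) ^ k * R.s = R.s / S.lam ^ n := by
      rw [inv_pow, hkn, inv_mul_eq_div]
    obtain ⟨h1, h2, h3, h4, h5⟩ := S.iterA_state hXinv hYinv k R hprim hdisj hmin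
    have hne : ((S.lam⁻¹ : ℝ)) ^ k ≠ 0 := pow_ne_zero _ (inv_ne_zero S.lam_ne)
    refine ⟨(S.mapA)^[k] R, (S.lam⁻¹) ^ k * t₀, h1, h2, h3, ?_, ?_, ?_, ?_⟩
    · rw [h4, hsval]; exact hb1
    · rw [h4, hsval]; exact hb2
    · rw [h4, h5]
      have hinv1 : (S.lam⁻¹) ^ k * S.lam ^ k = 1 := by
        rw [← mul_pow, inv_mul_cancel₀ S.lam_ne, one_pow]
      calc (S.lam⁻¹) ^ k * R.s * (S.lam ^ k * R.u)
          = ((S.lam⁻¹) ^ k * S.lam ^ k) * (R.s * R.u) := by ring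
        _ = R.s * R.u := by rw [hinv1, one_mul]
    · rw [h4, mul_div_mul_left _ _ hne]
  · set k := (-n).toNat with hk
    have hkn : (S.lam : ℝ) ^ k = S.lam ^ (-n) := by
      rw [← zpow_natCast, hk, Int.toNat_of_nonneg (by omega)]
    have hsval : S.lam ^ k * R.s = R.s / S.lam ^ n := by
      rw [hkn, _root_.zpow_neg, inv_mul_eq_div]
    obtain ⟨h1, h2, h3, h4, h5⟩ := S.iterB_state hXinv hYinv k R hprim hdisj hmin
    have hne : ((S.lam : ℝ)) ^ k ≠ 0 := pow_ne_zero _ S.lam_ne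
    refine ⟨(S.mapB)^[k] R, S.lam ^ k * t₀, h1, h2, h3, ?_, ?_, ?_, ?_⟩
    · rw [h4, hsval]; exact hb1
    · rw [h4, hsval]; exact hb2
    · rw [h4, h5]
      have hinv1 : S.lam ^ k * (S.lam⁻¹) ^ k = 1 := by
        rw [← mul_pow, mul_inv_cancel₀ S.lam_ne, one_pow]
      calc S.lam ^ k * R.s * ((S.lam⁻¹) ^ k * R.u)
          = (S.lam ^ k * (S.lam⁻¹) ^ k) * (R.s * R.u) := by ring
        _ = R.s * R.u := by rw [hinv1, one_mul]
    · rw [h4, mul_div_mul_left _ _ hne]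

/-! #### Normalization without `Y` -/

lemma iterA_prim {X : Set V} (hXinv : IsInvariant S.A X) (n : ℕ) {R : Rect}
    (h : R.IsPrimPos S.vs S.vu X) : ((S.mapA)^[n] R).IsPrimPos S.vs S.vu X := by
  induction n with
  | zero => simpa
  | succ n ih => rw [Function.iterate_succ_apply']; exact S.mapA_prim hXinv ih

lemma iterB_prim {X : Set V} (hXinv : IsInvariant S.A X) (n : ℕ) {R : Rect}
    (h : R.IsPrimPos S.vs S.vu X) : ((S.mapB)^[n] R).IsPrimPos S.vs S.vu X := by
  induction n with
  | zero => simpa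
  | succ n ih => rw [Function.iterate_succ_apply']; exact S.mapB_prim hXinv ih

lemma iterA_s (n : ℕ) (R : Rect) : ((S.mapA)^[n] R).s = (S.lam⁻¹) ^ n * R.s := by
  induction n with
  | zero => simp
  | succ n ih =>
    rw [Function.iterate_succ_apply']
    show S.lam⁻¹ * ((S.mapA)^[n] R).s = _
    rw [ih]; ring

lemma iterA_u (n : ℕ) (R : Rect) : ((S.mapA)^[n] R).u = S.lam ^ n * R.u := by
  induction n with
  | zero => simp
  | succ n ih =>
    rw [Function.iterate_succ_apply']
    show S.lam * ((S.mapA)^[n] R).u = _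
    rw [ih]; ring

lemma iterB_s (n : ℕ) (R : Rect) : ((S.mapB)^[n] R).s = S.lam ^ n * R.s := by
  induction n with
  | zero => simp
  | succ n ih =>
    rw [Function.iterate_succ_apply']
    show S.lam * ((S.mapB)^[n] R).s = _
    rw [ih]; ring

lemma iterB_u (n : ℕ) (R : Rect) : ((S.mapB)^[n] R).u = (S.lam⁻¹) ^ n * R.u := by
  induction n with
  | zero => simp
  | succ n ih =>
    rw [Function.iterate_succ_apply']
    show S.lam⁻¹ * ((S.mapB)^[n] R).u = _
    rw [ih]; ring

lemma normalizeX {X : Set V} (hXinv : IsInvariant S.A X)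
    {r₀ : ℝ} (hr₀ : 0 < r₀) (R : Rect) (hprim : R.IsPrimPos S.vs S.vu X) :
    ∃ R' : Rect, R'.IsPrimPos S.vs S.vu X ∧ r₀ ≤ R'.s ∧ R'.s < S.lam * r₀ ∧
      R'.s * R'.u = R.s * R.u := by
  obtain ⟨n, hn1, hn2⟩ : ∃ n : ℤ, S.lam ^ n ≤ R.s / r₀ ∧ R.s / r₀ < S.lam ^ (n+1) := by
    obtain ⟨n, hn⟩ := exists_mem_Ico_zpow (div_pos R.s_pos hr₀) S.hlam
    exact ⟨n, hn.1, hn.2⟩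
  have hp : (0:ℝ) < S.lam ^ n := zpow_pos S.lam_pos n
  have hb1 : r₀ ≤ R.s / S.lam ^ n := by
    have h₁ := (le_div_iff₀ hr₀).1 hn1
    rw [le_div_iff₀ hp]
    linarith
  have hb2 : R.s / S.lam ^ n < S.lam * r₀ := by
    have h₂ := (div_lt_iff₀ hr₀).1 hn2
    rw [zpow_add_one₀ S.lam_ne] at h₂
    rw [div_lt_iff₀ hp]
    nlinarith
  rcases le_or_gt 0 n with hc | hc
  · set k := n.toNat with hk
    have hkn : (S.lam : ℝ) ^ k = S.lam ^ n := by
      rw [← zpow_natCast, hk, Int.toNat_of_nonneg hc]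
    have hsval : (S.lam⁻¹) ^ k * R.s = R.s / S.lam ^ n := by
      rw [inv_pow, hkn, inv_mul_eq_div]
    refine ⟨(S.mapA)^[k] R, S.iterA_prim hXinv k hprim, ?_, ?_, ?_⟩
    · rw [S.iterA_s, hsval]; exact hb1
    · rw [S.iterA_s, hsval]; exact hb2
    · rw [S.iterA_s, S.iterA_u]
      have hinv1 : (S.lam⁻¹) ^ k * S.lam ^ k = 1 := by
        rw [← mul_pow, inv_mul_cancel₀ S.lam_ne, one_pow]
      calc (S.lam⁻¹) ^ k * R.s * (S.lam ^ k * R.u)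
          = ((S.lam⁻¹) ^ k * S.lam ^ k) * (R.s * R.u) := by ring
        _ = R.s * R.u := by rw [hinv1, one_mul]
  · set k := (-n).toNat with hk
    have hkn : (S.lam : ℝ) ^ k = S.lam ^ (-n) := by
      rw [← zpow_natCast, hk, Int.toNat_of_nonneg (by omega)]
    have hsval : S.lam ^ k * R.s = R.s / S.lam ^ n := by
      rw [hkn, _root_.zpow_neg, inv_mul_eq_div]
    refine ⟨(S.mapB)^[k] R, S.iterB_prim hXinv k hprim, ?_, ?_, ?_⟩
    · rw [S.iterB_s, hsval]; exact hb1
    · rw [S.iterB_s, hsval]; exact hb2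
    · rw [S.iterB_s, S.iterB_u]
      have hinv1 : S.lam ^ k * (S.lam⁻¹) ^ k = 1 := by
        rw [← mul_pow, mul_inv_cancel₀ S.lam_ne, one_pow]
      calc S.lam ^ k * R.s * ((S.lam⁻¹) ^ k * R.u)
          = (S.lam ^ k * (S.lam⁻¹) ^ k) * (R.s * R.u) := by ring
        _ = R.s * R.u := by rw [hinv1, one_mul]

/-! #### Area bounds for primitive rectangles -/

lemma incEnd_coords (R : Rect) :
    S.cs (R.incEnd S.vs S.vu - R.p) = R.s ∧ S.cu (R.incEnd S.vs S.vu - R.p) = R.u :=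
  S.point_comb.1 rfl

lemma no_big_prim {X : Set V} (hXne : X.Nonempty) (hXfin : IsTorusFinite X) {R : Rect}
    (hs : 2 * (S.kap + 1) ≤ R.s) (hu : 2 * (S.kap + 1) ≤ R.u) :
    ¬ R.IsPrimPos S.vs S.vu X := by
  rintro ⟨hpos, hcar⟩
  obtain ⟨x₀, hx₀⟩ := hXne
  have hkap := S.one_le_kap
  set mid := R.p + (R.s/2) • S.vs + (R.u/2) • S.vu with hmid
  obtain ⟨m, hm, hnear⟩ := lattice_near (mid - x₀)
  set x := x₀ + m with hx
  have hxX : x ∈ X := sat hXfin hx₀ hm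
  have hmx : ‖x - mid‖ ≤ 1/2 := by
    have h1 : x - mid = -(mid - x₀ - m) := by rw [hx]; abel
    rw [h1, norm_neg]
    exact hnear
  have hcsxm : |S.cs (x - mid)| ≤ S.kap / 2 := by
    calc |S.cs (x - mid)| ≤ S.kap * ‖x - mid‖ := S.abs_cs_le _
      _ ≤ S.kap * (1/2) := mul_le_mul_of_nonneg_left hmx S.kap_pos.le
      _ = S.kap / 2 := by ring
  have hcuxm : |S.cu (x - mid)| ≤ S.kap / 2 := by
    calc |S.cu (x - mid)| ≤ S.kap * ‖x - mid‖ := S.abs_cu_le _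
      _ ≤ S.kap * (1/2) := mul_le_mul_of_nonneg_left hmx S.kap_pos.le
      _ = S.kap / 2 := by ring
  have hmidc : S.cs (mid - R.p) = R.s/2 ∧ S.cu (mid - R.p) = R.u/2 := S.point_comb.1 hmid
  have hdec : x - R.p = (mid - R.p) + (x - mid) := by abel
  have hcs : S.cs (x - R.p) = R.s/2 + S.cs (x - mid) := by rw [hdec, cs_add, hmidc.1]
  have hcu : S.cu (x - R.p) = R.u/2 + S.cu (x - mid) := by rw [hdec, cu_add, hmidc.2]
  have hacs := abs_le.1 hcsxm
  have hacu := abs_le.1 hcuxm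
  have h0s : 0 < S.cs (x - R.p) := by rw [hcs]; nlinarith
  have h1s : S.cs (x - R.p) < R.s := by rw [hcs]; nlinarith
  have h0u : 0 < S.cu (x - R.p) := by rw [hcu]; nlinarith
  have h1u : S.cu (x - R.p) < R.u := by rw [hcu]; nlinarith
  have hxcar : x ∈ R.carrier S.vs S.vu :=
    S.mem_carrier_iff.2 ⟨h0s.le, h1s.le, h0u.le, h1u.le⟩
  have hmem : x ∈ ({R.p, R.incEnd S.vs S.vu} : Set V) := by
    rw [← hcar]; exact ⟨hxcar, hxX⟩
  rcases hmem with h | h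
  · have : S.cs (x - R.p) = 0 := by rw [h]; simp [cs_zero]
    linarith
  · have : S.cs (x - R.p) = R.s := by rw [h]; exact (S.incEnd_coords R).1
    linarith

lemma area_ub {X Y : Set V} (hXne : X.Nonempty) (hXfin : IsTorusFinite X)
    (hXinv : IsInvariant S.A X) (hYfin : IsTorusFinite Y) (hYinv : IsInvariant S.A Y)
    (hYne : Y.Nonempty) :
    ∀ R : Rect, R.IsPrimPos S.vs S.vu X → Disjoint (R.carrier S.vs S.vu) Y →
      R.s * R.u ≤ S.lam * (2 * (S.kap + 1))^2 := by
  intro R hprim hdisj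
  by_contra hgt
  push_neg at hgt
  have hkap := S.one_le_kap
  have hr₀ : (0:ℝ) < 2 * (S.kap + 1) := by linarith
  obtain ⟨R', hprim', hs1, hs2, hprod⟩ := S.normalizeX hXinv hr₀ R hprim
  have hu' : 2 * (S.kap + 1) ≤ R'.u := by
    nlinarith [R'.s_pos, R'.u_pos, S.lam_pos]
  exact S.no_big_prim hXne hXfin hs1 hu' hprim'

lemma area_lb {X : Set V} (hXfin : IsTorusFinite X) (hXinv : IsInvariant S.A X) :
    ∃ a₀ : ℝ, 0 < a₀ ∧ a₀ ≤ 1 ∧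
      ∀ R : Rect, R.IsPrimPos S.vs S.vu X → a₀ ≤ R.s * R.u := by
  classical
  set W : Set V := (X - X) ∩
    {v | 1 ≤ S.cs v ∧ S.cs v ≤ S.lam ∧ 0 < S.cu v ∧ S.cu v ≤ 1} with hW
  have hWfin : W.Finite := by
    obtain ⟨G, hG, hXX⟩ := tf_sub hXfin hXfin
    have hsub : W ⊆ (G + lattice) ∩
        Metric.closedBall 0 (S.lam * ‖S.vs‖ + ‖S.vu‖) := by
      rintro w ⟨hw1, hw2, hw3, hw4, hw5⟩
      refine ⟨by rw [← hXX]; exact hw1, ?_⟩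
      rw [Metric.mem_closedBall, dist_zero_right]
      have h1 := S.norm_le_coords w
      have h2 : |S.cs w| ≤ S.lam := by
        rw [abs_of_nonneg (by linarith)]; exact hw3
      have h3 : |S.cu w| ≤ 1 := by
        rw [abs_of_pos hw4]; exact hw5
      have h4 : |S.cs w| * ‖S.vs‖ ≤ S.lam * ‖S.vs‖ :=
        mul_le_mul_of_nonneg_right h2 (norm_nonneg _)
      have h5 : |S.cu w| * ‖S.vu‖ ≤ 1 * ‖S.vu‖ :=
        mul_le_mul_of_nonneg_right h3 (norm_nonneg _)
      linarith
    exact Set.Finite.subset (finite_inter hG _) hsub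
  have hmm : ∃ m : ℝ, 0 < m ∧ m ≤ 1 ∧ ∀ w ∈ W, m ≤ S.cu w := by
    rcases W.eq_empty_or_nonempty with he | hne
    · exact ⟨1, one_pos, le_refl 1, by rw [he]; simp⟩
    · obtain ⟨w₀, hw₀, hmin⟩ := Set.exists_min_image W S.cu hWfin hne
      refine ⟨min (S.cu w₀) 1, lt_min hw₀.2.2.2.1 one_pos, min_le_right _ _, ?_⟩
      intro w hw
      exact le_trans (min_le_left _ _) (hmin w hw)
  obtain ⟨m, hm0, hm1, hmW⟩ := hmm
  refine ⟨m, hm0, hm1, ?_⟩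
  intro R hprim
  obtain ⟨R', hprim', hs1, hs2, hprod⟩ := S.normalizeX hXinv one_pos R hprim
  rw [← hprod]
  set z := R'.incEnd S.vs S.vu - R'.p with hz
  have hzmem : z ∈ X - X := ⟨R'.incEnd S.vs S.vu, hprim'.1.2, R'.p, hprim'.1.1, rfl⟩
  have hzc := S.incEnd_coords R'
  rcases le_or_gt R'.u 1 with hu | hu
  · have hzW : z ∈ W := by
      refine ⟨hzmem, ?_, ?_, ?_, ?_⟩
      · rw [hz, hzc.1]; exact hs1
      · rw [hz, hzc.1]; linarith [hs2, mul_one S.lam]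
      · rw [hz, hzc.2]; exact R'.u_pos
      · rw [hz, hzc.2]; exact hu
    have := hmW z hzW
    rw [hz, hzc.2] at this
    nlinarith [R'.s_pos, R'.u_pos]
  · nlinarith [R'.s_pos, R'.u_pos]

/-! #### No `Y`-points on the invariant lines through `X` -/

lemma P_coords (p : V) (t b : ℝ) :
    S.cs (S.P p t b - p) = -t ∧ S.cu (S.P p t b - p) = b :=
  S.point_comb.1 (S.P_eq p t b)

lemma not_on_lines {X Y : Set V} (hXY : Disjoint X Y) (hXfin : IsTorusFinite X)
    (hXinv : IsInvariant S.A X) (hYfin : IsTorusFinite Y) (hYinv : IsInvariant S.A Y)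
    {x y : V} (hx : x ∈ X) (hy : y ∈ Y) : S.cs (y - x) ≠ 0 ∧ S.cu (y - x) ≠ 0 := by
  have hw0 : y - x ≠ 0 := by
    intro h
    have he : y = x := by
      have := sub_eq_zero.1 h; exact this
    rw [he] at hy
    exact Set.disjoint_left.1 hXY hx hy
  constructor
  · intro hcs
    have hrec := S.recon (y - x)
    rw [hcs, zero_smul, zero_add] at hrec
    have hcu0 : S.cu (y - x) ≠ 0 := by
      intro h; rw [h, zero_smul] at hrec; exact hw0 hrec
    have hmem : (S.cu (y - x)) • S.vu ∈ Y - X := by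
      rw [← hrec]; exact ⟨y, hy, x, hx, rfl⟩
    exact axis S.hBu S.hvu S.lam_inv_pos S.lam_inv_lt_one (tf_sub hXfin hYfin)
      (S.sub_invB hXinv hYinv) hcu0 hmem
  · intro hcu
    have hrec := S.recon (y - x)
    rw [hcu, zero_smul, add_zero] at hrec
    have hcs0 : S.cs (y - x) ≠ 0 := by
      intro h; rw [h, zero_smul] at hrec; exact hw0 hrec
    have hmem : (S.cs (y - x)) • S.vs ∈ Y - X := by
      rw [← hrec]; exact ⟨y, hy, x, hx, rfl⟩
    exact axis S.hAs S.hvs S.lam_inv_pos S.lam_inv_lt_one (tf_sub hXfin hYfin)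
      (S.sub_invA hXinv hYinv) hcs0 hmem

/-! #### Uniform lower bound for the first hit -/

lemma hit_lower {X Y : Set V} (hXY : Disjoint X Y) (hXfin : IsTorusFinite X)
    (hXinv : IsInvariant S.A X) (hYfin : IsTorusFinite Y) (hYinv : IsInvariant S.A Y) :
    ∃ β : ℝ, 0 < β ∧ β ≤ 1 ∧ ∀ p ∈ X, ∀ u : ℝ, 0 < u →
      u ≤ S.lam * (2 * (S.kap + 1))^2 →
      ∀ t₀, S.MinHit Y p u t₀ → β ≤ t₀ := by
  classical
  set a₁ : ℝ := S.lam * (2 * (S.kap + 1))^2 with ha₁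
  set W : Set V := (Y - X) ∩
    {v | -1 ≤ S.cs v ∧ S.cs v ≤ 0 ∧ 0 ≤ S.cu v ∧ S.cu v ≤ a₁} with hW
  have hWfin : W.Finite := by
    obtain ⟨G, hG, hYX⟩ := tf_sub hXfin hYfin
    have hsub : W ⊆ (G + lattice) ∩
        Metric.closedBall 0 (1 * ‖S.vs‖ + a₁ * ‖S.vu‖) := by
      rintro w ⟨hw1, h1, h2, h3, h4⟩
      refine ⟨by rw [← hYX]; exact hw1, ?_⟩
      rw [Metric.mem_closedBall, dist_zero_right]
      have hb := S.norm_le_coords w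
      have hcs : |S.cs w| ≤ 1 := by rw [abs_le]; exact ⟨h1, by linarith⟩
      have hcu : |S.cu w| ≤ a₁ := by
        rw [abs_of_nonneg h3]; exact h4
      have h5 : |S.cs w| * ‖S.vs‖ ≤ 1 * ‖S.vs‖ :=
        mul_le_mul_of_nonneg_right hcs (norm_nonneg _)
      have h6 : |S.cu w| * ‖S.vu‖ ≤ a₁ * ‖S.vu‖ :=
        mul_le_mul_of_nonneg_right hcu (norm_nonneg _)
      linarith
    exact Set.Finite.subset (finite_inter hG _) hsub
  have hneg : ∀ w ∈ W, S.cs w < 0 := by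
    rintro w ⟨hw1, h1, h2, h3, h4⟩
    obtain ⟨y, hy, x, hx, rfl⟩ := hw1
    exact lt_of_le_of_ne h2 (S.not_on_lines hXY hXfin hXinv hYfin hYinv hx hy).1
  have hβ : ∃ β : ℝ, 0 < β ∧ β ≤ 1 ∧ ∀ w ∈ W, β ≤ -S.cs w := by
    rcases W.eq_empty_or_nonempty with he | hne
    · exact ⟨1, one_pos, le_refl 1, by rw [he]; simp⟩
    · obtain ⟨w₀, hw₀, hmin⟩ := Set.exists_min_image W (fun w => -S.cs w) hWfin hne
      refine ⟨min (-S.cs w₀) 1, lt_min (by linarith [hneg w₀ hw₀]) one_pos,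
        min_le_right _ _, ?_⟩
      intro w hw
      exact le_trans (min_le_left _ _) (hmin w hw)
  obtain ⟨β, hβ0, hβ1, hβW⟩ := hβ
  refine ⟨β, hβ0, hβ1, ?_⟩
  intro p hp u hu hua t₀ hm
  rcases le_or_gt t₀ 1 with hcase | hcase
  · obtain ⟨ht₀, b, hb0, hb1, hmem⟩ := hm.1
    set w := S.P p t₀ b - p with hwdef
    have hco := S.P_coords p t₀ b
    have hwmem : w ∈ Y - X := ⟨S.P p t₀ b, hmem, p, hp, rfl⟩
    have hwW : w ∈ W := by
      refine ⟨hwmem, ?_, ?_, ?_, ?_⟩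
      · rw [hwdef, hco.1]; linarith
      · rw [hwdef, hco.1]; linarith
      · rw [hwdef, hco.2]; exact hb0
      · rw [hwdef, hco.2]; linarith
    have := hβW w hwW
    rw [hwdef, hco.1] at this
    linarith
  · linarith

end Setup

lemma rect_ext {R1 R2 : Rect} (hp : R1.p = R2.p) (hs : R1.s = R2.s) (hu : R1.u = R2.u) :
    R1 = R2 := by
  cases R1; cases R2; simp_all

end Aux

/-- (i) every primitive positive `𝒳`-rectangle `Δ` disjoint from
`𝒴̃` is a right horizontal subrectangle of a unique rectangle `D(Δ)` whose
interior is disjoint from `𝒴̃` and whose left unstable side meets `𝒴̃`;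
(ii) the ratios `ℓ^s(D(Δ))/ℓ^s(Δ)` are pinched between constants `1 < c < C`. -/
theorem statement_12 (A : Matrix (Fin 2) (Fin 2) ℤ) (hdet : A.det = 1) (htr : 2 < A.trace)
    (lam : ℝ) (hlam : 1 < lam) (vs vu : V) (hvs : vs ≠ 0) (hvu : vu ≠ 0)
    (hAs : actR A vs = lam⁻¹ • vs) (hAu : actR A vu = lam • vu)
    (X Y : Set V) (hXY : Disjoint X Y) (hXne : X.Nonempty) (hYne : Y.Nonempty)
    (hXfin : IsTorusFinite X) (hXinv : IsInvariant A X)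
    (hYfin : IsTorusFinite Y) (hYinv : IsInvariant A Y) :
    ∃ Dfun : Rect → Rect,
      (∀ Del : Rect, Del.IsPrimPos vs vu X → Disjoint (Del.carrier vs vu) Y →
        (IsRightHorizSub vs Del (Dfun Del) ∧
          Disjoint ((Dfun Del).interior vs vu) Y ∧
          ((Dfun Del).leftSide vu ∩ Y).Nonempty) ∧
        (∀ D' : Rect,
          IsRightHorizSub vs Del D' → Disjoint (D'.interior vs vu) Y →
          (D'.leftSide vu ∩ Y).Nonempty → D' = Dfun Del)) ∧
      ∃ c C : ℝ, 1 < c ∧ c < C ∧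
        ∀ Del : Rect, Del.IsPrimPos vs vu X → Disjoint (Del.carrier vs vu) Y →
          c < (Dfun Del).s / Del.s ∧ (Dfun Del).s / Del.s < C := by
  classical
  set S : Setup := ⟨A, hdet, lam, hlam, vs, vu, hvs, hvu, hAs, hAu⟩ with hS
  have hmin_ex : ∀ p : V, ∀ u : ℝ, 0 < u → ∃ t₀, S.MinHit Y p u t₀ := fun p u hu =>
    S.exists_minHit hYfin hYinv hYne p u hu
  choose! T hT using hmin_ex
  refine ⟨fun R => ⟨R.p - T R.p R.u • vs, R.s + T R.p R.u, R.u, by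
      have h := (hT R.p R.u R.u_pos).1.1
      linarith [R.s_pos], R.u_pos⟩, ?_, ?_⟩
  · -- part (i)
    intro Del hprim hdisj
    set t₀ := T Del.p Del.u with ht₀def
    have hm : S.MinHit Y Del.p Del.u t₀ := hT Del.p Del.u Del.u_pos
    have ht₀ : 0 < t₀ := hm.1.1
    constructor
    · refine ⟨⟨?_, rfl, ?_⟩, ?_, ?_⟩
      · show Del.s ≤ Del.s + t₀
        linarith
      · show Del.p = (Del.p - t₀ • vs) + (Del.s + t₀ - Del.s) • vs
        have e : Del.s + t₀ - Del.s = t₀ := by ring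
        rw [e, sub_add_cancel]
      · -- interior of D(Δ) is disjoint from Y
        rw [Set.disjoint_left]
        intro q hqi hqY
        have hqi' : 0 < S.cs (q - (Del.p - t₀ • vs)) ∧
            S.cs (q - (Del.p - t₀ • vs)) < Del.s + t₀ ∧
            0 < S.cu (q - (Del.p - t₀ • vs)) ∧
            S.cu (q - (Del.p - t₀ • vs)) < Del.u := S.mem_interior_iff.1 hqi
        obtain ⟨ha0, ha1, hb0, hb1⟩ := hqi'
        have hsplit : q - Del.p = (q - (Del.p - t₀ • vs)) + (-t₀) • vs := by
          rw [neg_smul]; abel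
        have hca : S.cs (q - Del.p) = S.cs (q - (Del.p - t₀ • vs)) - t₀ := by
          rw [hsplit, S.cs_add, S.cs_smul]
          have : S.cs vs = 1 := S.cs_vs
          rw [this]; ring
        have hcb : S.cu (q - Del.p) = S.cu (q - (Del.p - t₀ • vs)) := by
          rw [hsplit, S.cu_add, S.cu_smul]
          have : S.cu vs = 0 := S.cu_vs
          rw [this]; ring
        set a := S.cs (q - (Del.p - t₀ • vs)) with hadef
        set b := S.cu (q - (Del.p - t₀ • vs)) with hbdef
        rcases lt_trichotomy a t₀ with hlt | heq | hgt
        · -- q is a hit at time t₀ - a < t₀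
          have hqP : q = S.P Del.p (t₀ - a) b := by
            rw [S.P_eq]
            apply S.point_comb.2
            exact ⟨by rw [hca]; ring, hcb⟩
          have hhit := hm.2 (t₀ - a) ⟨by linarith, b, by linarith, by linarith,
            by rw [← hqP]; exact hqY⟩
          linarith
        · -- q lies on the left side of Δ
          have hqc : q ∈ Del.carrier vs vu := by
            apply S.mem_carrier_iff.2
            rw [hca, hcb, ← heq]
            refine ⟨by linarith, by linarith [Del.s_pos], by linarith, by linarith⟩
          exact Set.disjoint_left.1 hdisj hqc hqY
        · -- q lies in Δ
          have hqc : q ∈ Del.carrier vs vu := by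
            apply S.mem_carrier_iff.2
            rw [hca, hcb]
            refine ⟨by linarith, by linarith, by linarith, by linarith⟩
          exact Set.disjoint_left.1 hdisj hqc hqY
      · -- left side meets Y
        obtain ⟨hpos, b, hb0, hb1, hmem⟩ := hm.1
        exact ⟨S.P Del.p t₀ b, ⟨b, hb0, hb1, rfl⟩, hmem⟩
    · -- uniqueness
      intro D' hsub hdisj' hne'
      obtain ⟨hs_le, hu_eq, hp_eq⟩ := hsub
      set t' := D'.s - Del.s with ht'
      have ht'0 : 0 ≤ t' := by rw [ht']; linarith
      have hDp : D'.p = Del.p - t' • vs := by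
        rw [hp_eq]; abel
      obtain ⟨y, hyL, hyY⟩ := hne'
      obtain ⟨b, hb0, hb1, hyeq⟩ := hyL
      have hb1' : b ≤ Del.u := by rw [hu_eq]; exact hb1
      have hyP : y = S.P Del.p t' b := by rw [hyeq, hDp]; rfl
      have hcoy := S.P_coords Del.p t' b
      by_cases hzero : t' = 0
      · exfalso
        have hqc : y ∈ Del.carrier vs vu := by
          apply S.mem_carrier_iff.2
          have h1 : S.cs (y - Del.p) = -t' := by rw [hyP]; exact hcoy.1
          have h2 : S.cu (y - Del.p) = b := by rw [hyP]; exact hcoy.2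
          rw [h1, h2, hzero]
          refine ⟨by norm_num, by norm_num [Del.s_pos.le], hb0, hb1'⟩
        exact Set.disjoint_left.1 hdisj hqc hyY
      have ht'pos : 0 < t' := lt_of_le_of_ne ht'0 (Ne.symm hzero)
      have hle : t₀ ≤ t' := hm.2 t' ⟨ht'pos, b, hb0, hb1', by rw [← hyP]; exact hyY⟩
      have hge : t' ≤ t₀ := by
        by_contra hlt
        push_neg at hlt
        obtain ⟨_, b₀, hb₀0, hb₀1, hmem₀⟩ := hm.1
        have hb₀pos : 0 < b₀ := by
          rcases lt_or_eq_of_le hb₀0 with h | h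
          · exact h
          · exfalso
            have hnol := (S.not_on_lines hXY hXfin hXinv hYfin hYinv hprim.1.1 hmem₀).2
            have hc := (S.P_coords Del.p t₀ b₀).2
            exact hnol (hc.trans h.symm)
        have hb₀lt : b₀ < Del.u := by
          rcases lt_or_eq_of_le hb₀1 with h | h
          · exact h
          · exfalso
            have hnol := (S.not_on_lines hXY hXfin hXinv hYfin hYinv hprim.1.2 hmem₀).2
            have hsplit2 : S.P Del.p t₀ b₀ - Del.incEnd vs vu
                = (S.P Del.p t₀ b₀ - Del.p) - (Del.incEnd vs vu - Del.p) := by abel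
            have hc : S.cu (S.P Del.p t₀ b₀ - Del.incEnd vs vu) = b₀ - Del.u := by
              rw [hsplit2, S.cu_sub, (S.P_coords Del.p t₀ b₀).2, (S.incEnd_coords Del).2]
            exact hnol (by rw [hc, h, sub_self])
        have hyint : S.P Del.p t₀ b₀ ∈ D'.interior vs vu := by
          apply S.mem_interior_iff.2
          have hsplit3 : S.P Del.p t₀ b₀ - D'.p
              = (S.P Del.p t₀ b₀ - Del.p) + (Del.p - D'.p) := by abel
          have hDel2 : Del.p - D'.p = t' • vs := by rw [hDp]; abel
          have hcs' : S.cs (S.P Del.p t₀ b₀ - D'.p) = t' - t₀ := by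
            rw [hsplit3, S.cs_add, (S.P_coords Del.p t₀ b₀).1, hDel2, S.cs_smul]
            have : S.cs vs = 1 := S.cs_vs
            rw [this]; ring
          have hcu' : S.cu (S.P Del.p t₀ b₀ - D'.p) = b₀ := by
            rw [hsplit3, S.cu_add, (S.P_coords Del.p t₀ b₀).2, hDel2, S.cu_smul]
            have : S.cu vs = 0 := S.cu_vs
            rw [this]; ring
          rw [hcs', hcu']
          refine ⟨by linarith, ?_, hb₀pos, by rw [← hu_eq]; exact hb₀lt⟩
          have : t' < D'.s := by rw [ht']; linarith [Del.s_pos]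
          linarith
        exact Set.disjoint_left.1 hdisj' hyint hmem₀
      have heq : t' = t₀ := le_antisymm hge hle
      apply rect_ext
      · show D'.p = Del.p - t₀ • vs
        rw [hDp, heq]
      · show D'.s = Del.s + t₀
        rw [← heq, ht']; ring
      · show D'.u = Del.u
        exact hu_eq.symm
  · -- part (ii)
    obtain ⟨a₀, ha₀0, ha₀1, ha₀⟩ := S.area_lb hXfin hXinv
    have hub := S.area_ub hXne hXfin hXinv hYfin hYinv hYne
    obtain ⟨β, hβ0, hβ1, hβ⟩ := S.hit_lower hXY hXfin hXinv hYfin hYinv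
    have hu₀ : 0 < a₀ / S.lam := div_pos ha₀0 S.lam_pos
    obtain ⟨L₀, hL₀1, hL₀⟩ := S.strip hYfin hYinv hYne hu₀
    have hlampos := S.lam_pos
    have hlam1 : (1:ℝ) < S.lam := S.hlam
    refine ⟨1 + β / (2 * S.lam), L₀ + 2, ?_, ?_, ?_⟩
    · have : 0 < β / (2 * S.lam) := by positivity
      linarith
    · have : β / (2 * S.lam) < 1 := by
        rw [div_lt_one (by linarith)]
        linarith
      linarith
    · intro Del hprim hdisj
      set t₀ := T Del.p Del.u with ht₀def
      have hm : S.MinHit Y Del.p Del.u t₀ := hT Del.p Del.u Del.u_pos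
      have ht₀pos : 0 < t₀ := hm.1.1
      obtain ⟨R', t₀', hprim', hdisj', hm', hs1, hs2, hprod, hrat⟩ :=
        S.normalize hXinv hYinv one_pos Del hprim hdisj hm
      have hs2' : R'.s < S.lam := by linarith [hs2]
      have hs'pos := R'.s_pos
      have hu'pos := R'.u_pos
      have ht₀'pos : 0 < t₀' := hm'.1.1
      have hua : R'.u ≤ S.lam * (2 * (S.kap + 1))^2 := by
        have h1 := hub R' hprim' hdisj'
        nlinarith
      have hβt : β ≤ t₀' := hβ R'.p hprim'.1.1 R'.u hu'pos hua t₀' hm'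
      have hu₀le : a₀ / S.lam ≤ R'.u := by
        have h2 := ha₀ R' hprim'
        rw [div_le_iff₀ hlampos]
        nlinarith
      have htL : t₀' ≤ L₀ := by
        obtain ⟨t, b, ht, htL, hb0, hb1, hmem⟩ := hL₀ R'.p
        exact le_trans (hm'.2 t ⟨ht, b, hb0, le_trans hb1 hu₀le, hmem⟩) htL
      have hratio : (Del.s + t₀) / Del.s = 1 + t₀ / Del.s := by
        rw [add_div, div_self (ne_of_gt Del.s_pos)]
      have hts : t₀ / Del.s = t₀' / R'.s := hrat.symm
      constructor
      · show 1 + β / (2 * S.lam) < (Del.s + t₀) / Del.s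
        rw [hratio, hts]
        have h3 : β / (2 * S.lam) < t₀' / R'.s := by
          rw [div_lt_div_iff₀ (by linarith) hs'pos]
          nlinarith
        linarith
      · show (Del.s + t₀) / Del.s < L₀ + 2
        rw [hratio, hts]
        have h4 : t₀' / R'.s ≤ L₀ := by
          rw [div_le_iff₀ hs'pos]
          nlinarith
        linarith

end Paper
end

section
/- Let A be a 2×2 integer matrix with determinant 1 and trace > 2. Then every rectangle whose increasing diagonal has its origin and endpoint in ℤ², and every rectangle whose decreasing diagonal has its origin and endpoint in ℤ² (that is, every positive or negative (0,0)-rectangle, where (0,0) denotes the singleton {0} ⊆ 𝕋²), contains a point of the set {(0,1/2), (1/2,0), (1/2,1/2)} + ℤ². -/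
/- Common setup: following the paper, we identify each subset of the torus
`𝕋² = ℝ²/ℤ²` with its (`ℤ²`-saturated) lift to `ℝ²`. -/

open Matrix Set
open scoped Pointwise

namespace Paper

lemma aux_lattice_add {x y : V} (hx : x ∈ lattice) (hy : y ∈ lattice) :
    x + y ∈ lattice := by
  obtain ⟨m, hm⟩ := hx; obtain ⟨n, hn⟩ := hy
  exact ⟨m + n, by funext i; simp [← hm, ← hn]⟩

lemma aux_halfPoints_add {x y : V} (hx : x ∈ halfPoints) (hy : y ∈ lattice) :
    x + y ∈ halfPoints := by
  obtain ⟨w, hw, hxw⟩ := hx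
  refine ⟨w, hw, ?_⟩
  have : x + y - w = (x - w) + y := by abel
  rw [this]
  exact aux_lattice_add hxw hy

lemma aux_odd_part : ∀ N : ℕ, ∀ m : Fin 2 → ℤ, (m 0).natAbs + (m 1).natAbs ≤ N → m ≠ 0 →
    ∃ (k : ℕ) (n : Fin 2 → ℤ), (Odd (n 0) ∨ Odd (n 1)) ∧ ∀ i, m i = 2 ^ k * n i := by
  intro N
  induction N with
  | zero =>
    intro m hN hm
    exfalso; apply hm
    funext i
    fin_cases i
    · show m 0 = 0; omega
    · show m 1 = 0; omega
  | succ N ih =>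
    intro m hN hm
    by_cases h0 : Odd (m 0)
    · exact ⟨0, m, Or.inl h0, fun i => by ring⟩
    by_cases h1 : Odd (m 1)
    · exact ⟨0, m, Or.inr h1, fun i => by ring⟩
    have e0 : Even (m 0) := Int.not_odd_iff_even.mp h0
    have e1 : Even (m 1) := Int.not_odd_iff_even.mp h1
    obtain ⟨a, ha⟩ := e0
    obtain ⟨b, hb⟩ := e1
    have hn : (![a, b] : Fin 2 → ℤ) ≠ 0 := by
      intro h
      apply hm
      funext i
      have h0' := congrFun h 0
      have h1' := congrFun h 1
      simp at h0' h1'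
      fin_cases i <;> simp [ha, hb, h0', h1']
    have hNa : ((![a, b] : Fin 2 → ℤ) 0).natAbs + ((![a, b] : Fin 2 → ℤ) 1).natAbs ≤ N := by
      have hne : a ≠ 0 ∨ b ≠ 0 := by
        by_contra h
        push_neg at h
        exact hn (by funext i; fin_cases i <;> simp [h.1, h.2])
      simp only [Matrix.cons_val_zero, Matrix.cons_val_one, Matrix.head_cons]
      omega
    obtain ⟨k, n, hodd, heq⟩ := ih ![a, b] hNa hn
    refine ⟨k + 1, n, hodd, fun i => ?_⟩
    have h0' := heq 0
    have h1' := heq 1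
    simp at h0' h1'
    fin_cases i <;> simp [ha, hb, h0', h1'] <;> ring

lemma aux_half_mem (n : Fin 2 → ℤ) (h : Odd (n 0) ∨ Odd (n 1)) :
    (fun i => (n i : ℝ) / 2) ∈ halfPoints := by
  rcases Int.even_or_odd (n 0) with h0 | h0 <;> rcases Int.even_or_odd (n 1) with h1 | h1
  · exfalso
    rcases h with h | h
    · exact (Int.not_odd_iff_even.mpr h0) h
    · exact (Int.not_odd_iff_even.mpr h1) h
  · obtain ⟨a, ha⟩ := h0
    obtain ⟨b, hb⟩ := h1
    refine ⟨![0, 1/2], by simp, ⟨![a, b], ?_⟩⟩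
    funext i
    fin_cases i <;> simp [ha, hb] <;> push_cast <;> ring
  · obtain ⟨a, ha⟩ := h0
    obtain ⟨b, hb⟩ := h1
    refine ⟨![1/2, 0], by simp, ⟨![a, b], ?_⟩⟩
    funext i
    fin_cases i <;> simp [ha, hb] <;> push_cast <;> ring
  · obtain ⟨a, ha⟩ := h0
    obtain ⟨b, hb⟩ := h1
    refine ⟨![1/2, 1/2], by simp, ⟨![a, b], ?_⟩⟩
    funext i
    fin_cases i <;> simp [ha, hb] <;> push_cast <;> ring

lemma aux_main (vs vu : V)
    (hindep : ∀ a b : ℝ, b ≠ 0 → a • vs + b • vu ≠ 0)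
    (p q : V) (hp : p ∈ lattice) (hq : q ∈ lattice) (a b : ℝ) (hb : b ≠ 0)
    (hq' : q = p + a • vs + b • vu) :
    ∃ t : ℝ, 0 < t ∧ t ≤ 1 ∧ p + (t * a) • vs + (t * b) • vu ∈ halfPoints := by
  obtain ⟨mp, hmp⟩ := hp
  obtain ⟨mq, hmq⟩ := hq
  set m : Fin 2 → ℤ := fun i => mq i - mp i with hm
  have hcoord : ∀ i, a * vs i + b * vu i = (m i : ℝ) := by
    intro i
    have := congrFun hq' i
    have hpi : ((mp i : ℝ)) = p i := congrFun hmp i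
    have hqi : ((mq i : ℝ)) = q i := congrFun hmq i
    simp only [Pi.add_apply, Pi.smul_apply, smul_eq_mul] at this
    simp only [hm]
    push_cast
    rw [hpi, hqi]
    linarith
  have hm0 : m ≠ 0 := by
    intro h
    apply hindep a b hb
    funext i
    have := hcoord i
    rw [h] at this
    simp only [Pi.zero_apply, Int.cast_zero] at this
    simp only [Pi.add_apply, Pi.smul_apply, smul_eq_mul, Pi.zero_apply]
    linarith
  obtain ⟨k, n, hodd, heq⟩ :=
    aux_odd_part ((m 0).natAbs + (m 1).natAbs) m le_rfl hm0
  refine ⟨((2:ℝ) ^ (k + 1))⁻¹, by positivity, ?_, ?_⟩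
  · rw [inv_le_one_iff₀]
    right
    exact one_le_pow₀ (by norm_num : (1:ℝ) ≤ 2)
  · have hz : p + (((2:ℝ) ^ (k + 1))⁻¹ * a) • vs + (((2:ℝ) ^ (k + 1))⁻¹ * b) • vu
        = (fun i => (n i : ℝ) / 2) + p := by
      funext i
      simp only [Pi.add_apply, Pi.smul_apply, smul_eq_mul]
      have h1 : a * vs i + b * vu i = (2:ℝ) ^ k * (n i : ℝ) := by
        rw [hcoord i, heq i]; push_cast; ring
      have key : ((2:ℝ) ^ (k + 1))⁻¹ * (a * vs i + b * vu i) = (n i : ℝ) / 2 := by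
        rw [h1]
        have h3 : (0:ℝ) < 2 ^ k := by positivity
        rw [pow_succ]
        field_simp
      calc p i + ((2:ℝ) ^ (k + 1))⁻¹ * a * vs i + ((2:ℝ) ^ (k + 1))⁻¹ * b * vu i
          = p i + ((2:ℝ) ^ (k + 1))⁻¹ * (a * vs i + b * vu i) := by ring
        _ = (n i : ℝ) / 2 + p i := by rw [key]; ring
    rw [hz]
    exact aux_halfPoints_add (aux_half_mem n hodd) ⟨mp, hmp⟩

/-- every positive or negative `(0,0)`-rectangle (i.e. rectangle
whose increasing resp. decreasing diagonal has both endpoints in `ℤ²`) contains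
a point of `{(0,1/2), (1/2,0), (1/2,1/2)} + ℤ²`. -/
theorem statement_13 (A : Matrix (Fin 2) (Fin 2) ℤ) (hdet : A.det = 1) (htr : 2 < A.trace)
    (lam : ℝ) (hlam : 1 < lam) (vs vu : V) (hvs : vs ≠ 0) (hvu : vu ≠ 0)
    (hAs : actR A vs = lam⁻¹ • vs) (hAu : actR A vu = lam • vu) :
    ∀ R : Rect, (R.IsPos vs vu lattice ∨ R.IsNeg vs vu lattice) →
      (R.carrier vs vu ∩ halfPoints).Nonempty := by
  -- eigenvectors for distinct eigenvalues are independent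
  have hne : lam⁻¹ ≠ lam := by
    have h1 : lam⁻¹ < 1 := inv_lt_one_of_one_lt₀ hlam
    linarith
  have hindep : ∀ a b : ℝ, b ≠ 0 → a • vs + b • vu ≠ 0 := by
    intro a b hb h
    have hvu' : vu = (-(b⁻¹ * a)) • vs := by
      have : b • vu = -(a • vs) := by
        rw [← add_eq_zero_iff_eq_neg, add_comm]; exact h
      calc vu = b⁻¹ • (b • vu) := (inv_smul_smul₀ hb vu).symm
        _ = b⁻¹ • (-(a • vs)) := by rw [this]
        _ = (-(b⁻¹ * a)) • vs := by rw [smul_neg, smul_smul, neg_smul]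
    set c : ℝ := -(b⁻¹ * a)
    have hAc : actR A ((c : ℝ) • vs) = c • actR A vs := by
      unfold actR
      exact Matrix.mulVec_smul _ c vs
    have h1 : lam • vu = lam⁻¹ • vu := by
      calc lam • vu = actR A vu := hAu.symm
        _ = actR A (c • vs) := by rw [← hvu']
        _ = c • actR A vs := hAc
        _ = c • (lam⁻¹ • vs) := by rw [hAs]
        _ = lam⁻¹ • (c • vs) := (smul_comm _ _ _)
        _ = lam⁻¹ • vu := by rw [← hvu']
    have h2 : (lam - lam⁻¹) • vu = 0 := by
      rw [sub_smul, h1, sub_self]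
    rcases smul_eq_zero.mp h2 with h3 | h3
    · exact hne (by linarith)
    · exact hvu h3
  intro R hR
  rcases hR with ⟨hp, hq⟩ | ⟨hp, hq⟩
  · -- positive rectangle
    obtain ⟨t, ht0, ht1, hmem⟩ := aux_main vs vu hindep R.p (R.incEnd vs vu) hp hq
      R.s R.u R.u_pos.ne' (by rw [Rect.incEnd])
    refine ⟨R.p + (t * R.s) • vs + (t * R.u) • vu, ?_, hmem⟩
    exact ⟨t * R.s, t * R.u, (mul_pos ht0 R.s_pos).le,
      by nlinarith [R.s_pos], (mul_pos ht0 R.u_pos).le, by nlinarith [R.u_pos], rfl⟩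
  · -- negative rectangle
    obtain ⟨t, ht0, ht1, hmem⟩ := aux_main vs vu hindep (R.decOrigin vs) (R.decEnd vu) hp hq
      (-R.s) R.u R.u_pos.ne'
      (by rw [Rect.decOrigin, Rect.decEnd]; module)
    refine ⟨R.p + ((1 - t) * R.s) • vs + (t * R.u) • vu, ?_, ?_⟩
    · exact ⟨(1 - t) * R.s, t * R.u, by nlinarith [R.s_pos],
        by nlinarith [R.s_pos], (mul_pos ht0 R.u_pos).le, by nlinarith [R.u_pos], rfl⟩
    · have : R.p + ((1 - t) * R.s) • vs + (t * R.u) • vu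
          = R.decOrigin vs + (t * (-R.s)) • vs + (t * R.u) • vu := by
        rw [Rect.decOrigin]; module
      rw [this]
      exact hmem

end Paper
end

section
/- For every integer k ≥ 2, let A_k be the matrix with rows (k, k−1) and (1, 1), and define rectangles with respect to fixed eigenvectors v^s, v^u of A_k. Then there exist a positive rectangle (increasing-diagonal origin and endpoint in ℤ²) and a negative rectangle (decreasing-diagonal origin and endpoint in ℤ²) both disjoint from the set (1/2,1/2) + ℤ², and there exist a positive rectangle and a negative rectangle whose respective diagonal origins and endpoints lie in (1/2,1/2) + ℤ² and which are disjoint from ℤ². -/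
/- Common setup: following the paper, we identify each subset of the torus
`𝕋² = ℝ²/ℤ²` with its (`ℤ²`-saturated) lift to `ℝ²`. -/

open Matrix Set
open scoped Pointwise

namespace Paper

theorem exists_pos_rect (E X : Set V) (vs vu x : V) (A B : ℝ)
    (hAB : 0 < A * B)
    (hxE : x ∈ E) (hyE : x + A • vs + B • vu ∈ E)
    (hX : ∀ a b : ℝ, a ∈ Set.uIcc 0 A → b ∈ Set.uIcc 0 B → x + a • vs + b • vu ∉ X) :
    ∃ R : Rect, R.IsPos vs vu E ∧ Disjoint (R.carrier vs vu) X := by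
  rcases lt_trichotomy A 0 with hA | hA | hA
  · have hB : B < 0 := by nlinarith
    refine ⟨⟨x + A • vs + B • vu, -A, -B, by linarith, by linarith⟩, ⟨hyE, ?_⟩, ?_⟩
    · show x + A • vs + B • vu + (-A) • vs + (-B) • vu ∈ E
      have h : x + A • vs + B • vu + (-A) • vs + (-B) • vu = x := by module
      rw [h]; exact hxE
    · rw [Set.disjoint_left]
      rintro q ⟨a, b, h1, h2, h3, h4, rfl⟩
      dsimp only at h2 h4
      have heq : x + A • vs + B • vu + a • vs + b • vu
          = x + (A + a) • vs + (B + b) • vu := by module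
      rw [heq]
      exact hX _ _ (Set.mem_uIcc.2 (Or.inr ⟨by linarith, by linarith⟩))
        (Set.mem_uIcc.2 (Or.inr ⟨by linarith, by linarith⟩))
  · exfalso; rw [hA] at hAB; simp at hAB
  · have hB : 0 < B := by nlinarith
    refine ⟨⟨x, A, B, hA, hB⟩, ⟨hxE, hyE⟩, ?_⟩
    rw [Set.disjoint_left]
    rintro q ⟨a, b, h1, h2, h3, h4, rfl⟩
    exact hX _ _ (Set.mem_uIcc.2 (Or.inl ⟨h1, h2⟩)) (Set.mem_uIcc.2 (Or.inl ⟨h3, h4⟩))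

theorem exists_neg_rect (E X : Set V) (vs vu x : V) (A B : ℝ)
    (hAB : A * B < 0)
    (hxE : x ∈ E) (hyE : x + A • vs + B • vu ∈ E)
    (hX : ∀ a b : ℝ, a ∈ Set.uIcc 0 A → b ∈ Set.uIcc 0 B → x + a • vs + b • vu ∉ X) :
    ∃ R : Rect, R.IsNeg vs vu E ∧ Disjoint (R.carrier vs vu) X := by
  rcases lt_trichotomy A 0 with hA | hA | hA
  · have hB : 0 < B := by nlinarith
    refine ⟨⟨x + A • vs, -A, B, by linarith, hB⟩, ⟨?_, ?_⟩, ?_⟩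
    · show x + A • vs + (-A) • vs ∈ E
      have h : x + A • vs + (-A) • vs = x := by module
      rw [h]; exact hxE
    · show x + A • vs + B • vu ∈ E
      exact hyE
    · rw [Set.disjoint_left]
      rintro q ⟨a, b, h1, h2, h3, h4, rfl⟩
      dsimp only at h2 h4
      have heq : x + A • vs + a • vs + b • vu = x + (A + a) • vs + b • vu := by module
      rw [heq]
      exact hX _ _ (Set.mem_uIcc.2 (Or.inr ⟨by linarith, by linarith⟩))
        (Set.mem_uIcc.2 (Or.inl ⟨h3, h4⟩))
  · exfalso; rw [hA] at hAB; simp at hAB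
  · have hB : B < 0 := by nlinarith
    refine ⟨⟨x + B • vu, A, -B, hA, by linarith⟩, ⟨?_, ?_⟩, ?_⟩
    · show x + B • vu + A • vs ∈ E
      have h : x + B • vu + A • vs = x + A • vs + B • vu := by module
      rw [h]; exact hyE
    · show x + B • vu + (-B) • vu ∈ E
      have h : x + B • vu + (-B) • vu = x := by module
      rw [h]; exact hxE
    · rw [Set.disjoint_left]
      rintro q ⟨a, b, h1, h2, h3, h4, rfl⟩
      dsimp only at h2 h4
      have heq : x + B • vu + a • vs + b • vu = x + a • vs + (B + b) • vu := by module
      rw [heq]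
      exact hX _ _ (Set.mem_uIcc.2 (Or.inl ⟨h1, h2⟩))
        (Set.mem_uIcc.2 (Or.inr ⟨by linarith, by linarith⟩))

lemma scaleP (a A e : ℝ) (he : e ≠ 0) (hA : 0 < A) (ha : a ∈ Set.uIcc 0 (A / e)) :
    0 ≤ a * e ∧ a * e ≤ A := by
  have hae : A / e * e = A := div_mul_cancel₀ A he
  rcases Set.mem_uIcc.1 ha with ⟨h1, h2⟩ | ⟨h1, h2⟩ <;> rcases he.lt_or_gt with he' | he'
  · exfalso
    nlinarith [hae, mul_nonpos_of_nonneg_of_nonpos (le_trans h1 h2) he'.le]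
  · refine ⟨mul_nonneg h1 he'.le, ?_⟩
    have h3 := mul_le_mul_of_nonneg_right h2 he'.le
    rwa [hae] at h3
  · refine ⟨by nlinarith [mul_nonneg (neg_nonneg.2 h2) (neg_nonneg.2 he'.le)], ?_⟩
    have h3 := mul_le_mul_of_nonpos_right h1 he'.le
    rwa [hae] at h3
  · exfalso
    nlinarith [hae, mul_nonneg (neg_nonneg.2 (le_trans h1 h2)) he'.le]

lemma scaleN (a A e : ℝ) (he : e ≠ 0) (hA : A < 0) (ha : a ∈ Set.uIcc 0 (A / e)) :
    A ≤ a * e ∧ a * e ≤ 0 := by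
  have ha' : -a ∈ Set.uIcc 0 (-A / e) := by
    rw [neg_div]
    rcases Set.mem_uIcc.1 ha with ⟨h1, h2⟩ | ⟨h1, h2⟩
    · exact Set.mem_uIcc.2 (Or.inr ⟨by linarith, by linarith⟩)
    · exact Set.mem_uIcc.2 (Or.inl ⟨by linarith, by linarith⟩)
  have h := scaleP (-a) (-A) e he (by linarith) ha'
  constructor <;> nlinarith [h.1, h.2]

lemma core1' (lam r kk U W : ℝ) (hr : lam * r = 1) (hsum : lam + r = kk + 1)
    (hrpos : 0 < r) (hr1 : r < 1) (hlam : 1 < lam)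
    (hkD : kk - 1 < lam - r)
    (hU0 : 0 ≤ U) (hU1 : U ≤ (lam - 1)/(lam - r))
    (hW0 : 0 ≤ W) (hW1 : W ≤ (1 - r)/(lam - r))
    (m n : ℤ) (hm : (m:ℝ) = U*(r-1) + W*(lam-1) - 1/2)
    (hn : (n:ℝ) = U + W - 1/2) : False := by
  have hDpos : (0:ℝ) < lam - r := by linarith
  have hUD : U * (lam - r) ≤ lam - 1 := (le_div_iff₀ hDpos).1 hU1
  have hWD : W * (lam - r) ≤ 1 - r := (le_div_iff₀ hDpos).1 hW1
  have hsub : (1 - r) * (lam - 1) = kk - 1 := by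
    linear_combination hsum - hr
  have hs_ub : U*(r-1) + W*(lam-1) < 1 := by
    nlinarith [mul_le_mul_of_nonneg_right hWD (by linarith : (0:ℝ) ≤ lam - 1),
      mul_nonneg hU0 (by linarith : (0:ℝ) ≤ 1 - r), hkD, hDpos, hsub]
  have hs_lb : -1 < U*(r-1) + W*(lam-1) := by
    nlinarith [mul_le_mul_of_nonneg_right hUD (by linarith : (0:ℝ) ≤ 1 - r),
      mul_nonneg hW0 (by linarith : (0:ℝ) ≤ lam - 1), hkD, hDpos, hsub]
  have hm1 : m < 1 := by exact_mod_cast show (m:ℝ) < 1 by linarith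
  have hm2 : (-2 : ℤ) < m := by exact_mod_cast show (-2:ℝ) < (m:ℝ) by push_cast; linarith
  have hUW1 : U + W ≤ 1 := by
    have h1 : U * (lam - r) + W * (lam - r) ≤ lam - r := by linarith
    nlinarith [h1, hDpos]
  have hn0 : n = 0 := by
    have h1 : (n:ℝ) < 1 := by linarith
    have h2 : (-1:ℝ) < (n:ℝ) := by linarith
    have h3 : n < 1 := by exact_mod_cast h1
    have h4 : (-1:ℤ) < n := by exact_mod_cast h2
    omega
  have hUW : U + W = 1/2 := by
    rw [hn0] at hn
    push_cast at hn
    linarith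
  have hm' : m = 0 ∨ m = -1 := by omega
  rcases hm' with rfl | rfl
  · have hsum2 : U*(r-1) + W*(lam-1) = 1/2 := by push_cast at hm; linarith
    have hW2 : W*(lam - r) = 1 - r/2 := by linear_combination hsum2 - (r-1) * hUW
    linarith [hW2, hWD, hrpos]
  · have hsum2 : U*(r-1) + W*(lam-1) = -1/2 := by push_cast at hm; linarith
    have hU2 : U*(lam - r) = lam/2 := by linear_combination (lam-1)*hUW - hsum2
    have hU12 : U ≤ 1/2 := by linarith
    nlinarith [hU2, hrpos, hDpos, mul_le_mul_of_nonneg_right hU12 hDpos.le]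

lemma core0' (lam r U W : ℝ) (hD2 : 2 < lam - r)
    (h1 : -(1/(lam - r)) ≤ U) (h2 : U ≤ 0) (h3 : 0 ≤ W) (h4 : W ≤ 1/(lam - r))
    (n : ℤ) (hn : (n:ℝ) = U + W - 1/2) : False := by
  have hDpos : (0:ℝ) < lam - r := by linarith
  have hD' : 1/(lam - r) < 1/2 := by
    rw [div_lt_div_iff₀ hDpos (by norm_num : (0:ℝ) < 2)]
    linarith
  have hn1 : (n:ℝ) < 0 := by linarith
  have hn2 : (-1:ℝ) < (n:ℝ) := by linarith
  have h5 : n < 0 := by exact_mod_cast hn1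
  have h6 : (-1:ℤ) < n := by exact_mod_cast hn2
  omega

set_option maxHeartbeats 1000000 in
theorem statement_14_aux (k : ℕ) (hk : 2 ≤ k)
    (lam : ℝ) (hlam : 1 < lam) (vs vu : V) (hvs : vs ≠ 0) (hvu : vu ≠ 0)
    (hAs : actR !![(k : ℤ), (k : ℤ) - 1; 1, 1] vs = lam⁻¹ • vs)
    (hAu : actR !![(k : ℤ), (k : ℤ) - 1; 1, 1] vu = lam • vu) :
    (∃ R : Rect, R.IsPos vs vu lattice ∧ Disjoint (R.carrier vs vu) halfCenter) ∧
    (∃ R : Rect, R.IsNeg vs vu lattice ∧ Disjoint (R.carrier vs vu) halfCenter) ∧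
    (∃ R : Rect, R.IsPos vs vu halfCenter ∧ Disjoint (R.carrier vs vu) lattice) ∧
    (∃ R : Rect, R.IsNeg vs vu halfCenter ∧ Disjoint (R.carrier vs vu) lattice) := by
  have hlam0 : (0:ℝ) < lam := by linarith
  set r : ℝ := lam⁻¹ with hrdef
  have hr : lam * r = 1 := mul_inv_cancel₀ (ne_of_gt hlam0)
  have hrpos : 0 < r := inv_pos.2 hlam0
  have hr1 : r < 1 := by nlinarith
  -- components of the eigenvector equations
  have hs1 : vs 0 + vs 1 = r * vs 1 := by
    have h := congrFun hAs 1
    simp [actR, Matrix.mulVec, Matrix.map_apply, Fin.sum_univ_two, dotProduct] at h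
    linarith [h]
  have hu1 : vu 0 + vu 1 = lam * vu 1 := by
    have h := congrFun hAu 1
    simp [actR, Matrix.mulVec, Matrix.map_apply, Fin.sum_univ_two, dotProduct] at h
    linarith [h]
  have hu0 : (k:ℝ) * vu 0 + ((k:ℝ) - 1) * vu 1 = lam * vu 0 := by
    have h := congrFun hAu 0
    simp [actR, Matrix.mulVec, Matrix.map_apply, Fin.sum_univ_two, dotProduct] at h
    push_cast at h
    linarith [h]
  set c : ℝ := vs 1 with hcdef
  set d : ℝ := vu 1 with hddef
  have hvs0 : vs 0 = (r - 1) * c := by rw [hcdef]; linarith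
  have hvu0 : vu 0 = (lam - 1) * d := by rw [hddef]; linarith
  have hc : c ≠ 0 := by
    intro h0
    apply hvs
    funext i
    fin_cases i
    · simpa [h0] using hvs0
    · simpa using h0
  have hd : d ≠ 0 := by
    intro h0
    apply hvu
    funext i
    fin_cases i
    · simpa [h0] using hvu0
    · simpa using h0
  -- the eigenvalue relation
  have hquad : lam * lam = ((k:ℝ) + 1) * lam - 1 := by
    have h := hu0
    rw [hvu0] at h
    have h2 : ((k:ℝ) * (lam - 1) + ((k:ℝ) - 1)) * d = lam * (lam - 1) * d := by
      linear_combination h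
    have h3 := mul_right_cancel₀ hd h2
    linear_combination -h3
  have hsum : lam + r = (k:ℝ) + 1 := by
    have h : lam * (lam + r) = lam * ((k:ℝ) + 1) := by
      rw [mul_add, hr]
      linear_combination hquad
    exact mul_left_cancel₀ (ne_of_gt hlam0) h
  have hk2 : (2:ℝ) ≤ (k:ℝ) := by exact_mod_cast hk
  -- quantities
  have hDpos : (0:ℝ) < lam - r := by linarith
  have hD4 : (lam - r)^2 = ((k:ℝ)+1)^2 - 4 := by
    linear_combination (lam + r + ((k:ℝ)+1)) * hsum - 4 * hr
  have hD2 : (2:ℝ) < lam - r := by nlinarith [hD4, hk2, hDpos]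
  have hkD : (k:ℝ) - 1 < lam - r := by nlinarith [hD4, hk2, hDpos]
  set Del : ℝ := lam - r with hDel
  set U1 : ℝ := (lam - 1) / Del with hU1def
  set W1 : ℝ := (1 - r) / Del with hW1def
  set W0 : ℝ := 1 / Del with hW0def
  set U0 : ℝ := -(1 / Del) with hU0def
  have hU1pos : 0 < U1 := div_pos (by linarith) hDpos
  have hW1pos : 0 < W1 := div_pos (by linarith) hDpos
  have hW0pos : 0 < W0 := by rw [hW0def]; exact one_div_pos.2 hDpos
  have hU0neg : U0 < 0 := by
    rw [hU0def]
    have : 0 < 1 / Del := one_div_pos.2 hDpos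
    linarith
  -- the core Diophantine exclusions
  have core1 : ∀ U W : ℝ, 0 ≤ U → U ≤ U1 → 0 ≤ W → W ≤ W1 →
      ∀ m n : ℤ, (m:ℝ) = U*(r-1) + W*(lam-1) - 1/2 → (n:ℝ) = U + W - 1/2 → False := by
    intro U W h1 h2 h3 h4 m n hm hn
    rw [hU1def, hDel] at h2
    rw [hW1def, hDel] at h4
    exact core1' lam r (k:ℝ) U W hr hsum hrpos hr1 hlam hkD h1 h2 h3 h4 m n hm hn
  have core0 : ∀ U W : ℝ, U0 ≤ U → U ≤ 0 → 0 ≤ W → W ≤ W0 →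
      ∀ n : ℤ, (n:ℝ) = U + W - 1/2 → False := by
    intro U W h1 h2 h3 h4 n hn
    rw [hU0def, hDel] at h1
    rw [hW0def, hDel] at h4
    exact core0' lam r U W hD2 h1 h2 h3 h4 n hn
  -- coordinate identities
  have hDne : Del ≠ 0 := ne_of_gt hDpos
  have hid10 : (U1/c) * vs 0 + (W1/d) * vu 0 = 0 := by
    rw [hvs0, hvu0, hU1def, hW1def]
    field_simp
    try ring
  have hid11 : (U1/c) * c + (W1/d) * d = 1 := by
    rw [hU1def, hW1def, hDel]
    have h' : lam - r ≠ 0 := by rw [← hDel]; exact hDne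
    field_simp
    try ring
  have hid00 : (U0/c) * vs 0 + (W0/d) * vu 0 = 1 := by
    rw [hvs0, hvu0, hU0def, hW0def]
    field_simp
    try ring
  have hid01 : (U0/c) * c + (W0/d) * d = 0 := by
    rw [hU0def, hW0def]
    field_simp
    ring
  -- lattice / halfCenter memberships
  have hlat0 : (0:V) ∈ lattice := ⟨0, by funext i; simp⟩
  have hlatE1 : (0:V) + (U1/c) • vs + (W1/d) • vu ∈ lattice := by
    refine ⟨![0, 1], ?_⟩
    funext i
    fin_cases i
    · show ((0:ℤ):ℝ) = 0 + (U1/c) * vs 0 + (W1/d) * vu 0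
      push_cast
      linarith [hid10]
    · show ((1:ℤ):ℝ) = 0 + (U1/c) * c + (W1/d) * d
      push_cast
      linarith [hid11]
  have hlatE0 : (0:V) + (U0/c) • vs + (W0/d) • vu ∈ lattice := by
    refine ⟨![1, 0], ?_⟩
    funext i
    fin_cases i
    · show ((1:ℤ):ℝ) = 0 + (U0/c) * vs 0 + (W0/d) * vu 0
      push_cast
      linarith [hid00]
    · show ((0:ℤ):ℝ) = 0 + (U0/c) * c + (W0/d) * d
      push_cast
      linarith [hid01]
  have hhc1 : (![1/2, 1/2] : V) ∈ halfCenter := by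
    refine ⟨0, ?_⟩
    funext i
    fin_cases i
    · show ((0:ℤ):ℝ) = 1/2 - 1/2
      norm_num
    · show ((0:ℤ):ℝ) = 1/2 - 1/2
      norm_num
  have hhcE1 : (![1/2, 1/2] : V) + (U1/c) • vs + (W1/d) • vu ∈ halfCenter := by
    refine ⟨![0, 1], ?_⟩
    funext i
    fin_cases i
    · show ((0:ℤ):ℝ) = 1/2 + (U1/c) * vs 0 + (W1/d) * vu 0 - 1/2
      push_cast
      linarith [hid10]
    · show ((1:ℤ):ℝ) = 1/2 + (U1/c) * c + (W1/d) * d - 1/2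
      push_cast
      linarith [hid11]
  have hhcE0 : (![1/2, 1/2] : V) + (U0/c) • vs + (W0/d) • vu ∈ halfCenter := by
    refine ⟨![1, 0], ?_⟩
    funext i
    fin_cases i
    · show ((1:ℤ):ℝ) = 1/2 + (U0/c) * vs 0 + (W0/d) * vu 0 - 1/2
      push_cast
      linarith [hid00]
    · show ((0:ℤ):ℝ) = 1/2 + (U0/c) * c + (W0/d) * d - 1/2
      push_cast
      linarith [hid01]
  -- disjointness data
  have hX1L : ∀ a b : ℝ, a ∈ Set.uIcc 0 (U1/c) → b ∈ Set.uIcc 0 (W1/d) →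
      (0:V) + a • vs + b • vu ∉ halfCenter := by
    intro a b ha hb hmem
    obtain ⟨hac1, hac2⟩ := scaleP a U1 c hc hU1pos ha
    obtain ⟨hbd1, hbd2⟩ := scaleP b W1 d hd hW1pos hb
    obtain ⟨m, hm⟩ := hmem
    have h0 : (m 0 : ℝ) = 0 + a * vs 0 + b * vu 0 - 1/2 := congrFun hm 0
    have h1 : (m 1 : ℝ) = 0 + a * c + b * d - 1/2 := congrFun hm 1
    rw [hvs0, hvu0] at h0
    exact core1 (a*c) (b*d) hac1 hac2 hbd1 hbd2 (m 0) (m 1)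
      (by linear_combination h0) (by linear_combination h1)
  have hX0L : ∀ a b : ℝ, a ∈ Set.uIcc 0 (U0/c) → b ∈ Set.uIcc 0 (W0/d) →
      (0:V) + a • vs + b • vu ∉ halfCenter := by
    intro a b ha hb hmem
    obtain ⟨hac1, hac2⟩ := scaleN a U0 c hc hU0neg ha
    obtain ⟨hbd1, hbd2⟩ := scaleP b W0 d hd hW0pos hb
    obtain ⟨m, hm⟩ := hmem
    have h1 : (m 1 : ℝ) = 0 + a * c + b * d - 1/2 := congrFun hm 1
    exact core0 (a*c) (b*d) hac1 hac2 hbd1 hbd2 (m 1) (by linear_combination h1)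
  have hX1H : ∀ a b : ℝ, a ∈ Set.uIcc 0 (U1/c) → b ∈ Set.uIcc 0 (W1/d) →
      (![1/2, 1/2] : V) + a • vs + b • vu ∉ lattice := by
    intro a b ha hb hmem
    obtain ⟨hac1, hac2⟩ := scaleP a U1 c hc hU1pos ha
    obtain ⟨hbd1, hbd2⟩ := scaleP b W1 d hd hW1pos hb
    obtain ⟨m, hm⟩ := hmem
    have h0 : (m 0 : ℝ) = 1/2 + a * vs 0 + b * vu 0 := congrFun hm 0
    have h1 : (m 1 : ℝ) = 1/2 + a * c + b * d := congrFun hm 1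
    rw [hvs0, hvu0] at h0
    refine core1 (a*c) (b*d) hac1 hac2 hbd1 hbd2 (m 0 - 1) (m 1 - 1) ?_ ?_
    · push_cast
      linear_combination h0
    · push_cast
      linear_combination h1
  have hX0H : ∀ a b : ℝ, a ∈ Set.uIcc 0 (U0/c) → b ∈ Set.uIcc 0 (W0/d) →
      (![1/2, 1/2] : V) + a • vs + b • vu ∉ lattice := by
    intro a b ha hb hmem
    obtain ⟨hac1, hac2⟩ := scaleN a U0 c hc hU0neg ha
    obtain ⟨hbd1, hbd2⟩ := scaleP b W0 d hd hW0pos hb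
    obtain ⟨m, hm⟩ := hmem
    have h1 : (m 1 : ℝ) = 1/2 + a * c + b * d := congrFun hm 1
    refine core0 (a*c) (b*d) hac1 hac2 hbd1 hbd2 (m 1 - 1) ?_
    push_cast
    linear_combination h1
  -- assembling the four rectangles
  have hcd := mul_ne_zero hc hd
  refine ⟨?_, ?_, ?_, ?_⟩
  · rcases hcd.lt_or_gt with hcd' | hcd'
    · refine exists_pos_rect lattice halfCenter vs vu 0 (U0/c) (W0/d) ?_ hlat0 hlatE0 hX0L
      rw [show U0/c*(W0/d) = (U0*W0)/(c*d) by ring]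
      exact div_pos_of_neg_of_neg (by nlinarith [hU0neg, hW0pos]) hcd'
    · refine exists_pos_rect lattice halfCenter vs vu 0 (U1/c) (W1/d) ?_ hlat0 hlatE1 hX1L
      rw [show U1/c*(W1/d) = (U1*W1)/(c*d) by ring]
      exact div_pos (mul_pos hU1pos hW1pos) hcd'
  · rcases hcd.lt_or_gt with hcd' | hcd'
    · refine exists_neg_rect lattice halfCenter vs vu 0 (U1/c) (W1/d) ?_ hlat0 hlatE1 hX1L
      rw [show U1/c*(W1/d) = (U1*W1)/(c*d) by ring]
      exact div_neg_of_pos_of_neg (mul_pos hU1pos hW1pos) hcd'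
    · refine exists_neg_rect lattice halfCenter vs vu 0 (U0/c) (W0/d) ?_ hlat0 hlatE0 hX0L
      rw [show U0/c*(W0/d) = (U0*W0)/(c*d) by ring]
      exact div_neg_of_neg_of_pos (by nlinarith [hU0neg, hW0pos]) hcd'
  · rcases hcd.lt_or_gt with hcd' | hcd'
    · refine exists_pos_rect halfCenter lattice vs vu ![1/2, 1/2] (U0/c) (W0/d) ?_ hhc1 hhcE0 hX0H
      rw [show U0/c*(W0/d) = (U0*W0)/(c*d) by ring]
      exact div_pos_of_neg_of_neg (by nlinarith [hU0neg, hW0pos]) hcd'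
    · refine exists_pos_rect halfCenter lattice vs vu ![1/2, 1/2] (U1/c) (W1/d) ?_ hhc1 hhcE1 hX1H
      rw [show U1/c*(W1/d) = (U1*W1)/(c*d) by ring]
      exact div_pos (mul_pos hU1pos hW1pos) hcd'
  · rcases hcd.lt_or_gt with hcd' | hcd'
    · refine exists_neg_rect halfCenter lattice vs vu ![1/2, 1/2] (U1/c) (W1/d) ?_ hhc1 hhcE1 hX1H
      rw [show U1/c*(W1/d) = (U1*W1)/(c*d) by ring]
      exact div_neg_of_pos_of_neg (mul_pos hU1pos hW1pos) hcd'
    · refine exists_neg_rect halfCenter lattice vs vu ![1/2, 1/2] (U0/c) (W0/d) ?_ hhc1 hhcE0 hX0H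
      rw [show U0/c*(W0/d) = (U0*W0)/(c*d) by ring]
      exact div_neg_of_neg_of_pos (by nlinarith [hU0neg, hW0pos]) hcd'

/-- for the matrix `A_k = !![k, k-1; 1, 1]` (`k ≥ 2`), there are
positive and negative `(0,0)`-rectangles disjoint from `(1/2,1/2) + ℤ²`, and
positive and negative `(1/2,1/2)`-rectangles disjoint from `ℤ²`. -/
theorem statement_14 (k : ℕ) (hk : 2 ≤ k)
    (lam : ℝ) (hlam : 1 < lam) (vs vu : V) (hvs : vs ≠ 0) (hvu : vu ≠ 0)
    (hAs : actR !![(k : ℤ), (k : ℤ) - 1; 1, 1] vs = lam⁻¹ • vs)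
    (hAu : actR !![(k : ℤ), (k : ℤ) - 1; 1, 1] vu = lam • vu) :
    (∃ R : Rect, R.IsPos vs vu lattice ∧ Disjoint (R.carrier vs vu) halfCenter) ∧
    (∃ R : Rect, R.IsNeg vs vu lattice ∧ Disjoint (R.carrier vs vu) halfCenter) ∧
    (∃ R : Rect, R.IsPos vs vu halfCenter ∧ Disjoint (R.carrier vs vu) lattice) ∧
    (∃ R : Rect, R.IsNeg vs vu halfCenter ∧ Disjoint (R.carrier vs vu) lattice) := by
  exact statement_14_aux k hk lam hlam vs vu hvs hvu hAs hAu

end Paper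
end
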